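/- Let M be a left R-module with two exact sequences 0 → K_n → G_{n-1} → ... → G_0 → M → 0 and 0 → K'_n → G'_{n-1} → ... → G'_0 → M → 0, where all G_i and G'_i are X-Gorenstein projective. Then K_n is X-Gorenstein projective if and only if K'_n is. -/

import Mathlib

open CategoryTheory DirectSum

universe u

/-- An `𝒳`-complete projective resolution: a doubly infinite exact sequence of
projective `R`-modules that remains exact after applying `Hom_R(-, Y)`
for every `Y` in the class `𝒳`. -/
structure XCompleteResolution (R : Type u) [Ring R] (𝒳 : ModuleCat.{u} R → Prop) where
  P : ℤ → ModuleCat.{u} R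
  d : ∀ n : ℤ, P n →ₗ[R] P (n + 1)
  projective : ∀ n, Module.Projective R (P n)
  exact : ∀ n, Function.Exact (d n) (d (n + 1))
  homExact : ∀ (Y : ModuleCat.{u} R), 𝒳 Y → ∀ n : ℤ,
    Function.Exact (fun f : P (n + 1 + 1) →ₗ[R] Y => f ∘ₗ d (n + 1))
      (fun f : P (n + 1) →ₗ[R] Y => f ∘ₗ d n)

/-- `G` is `𝒳`-Gorenstein projective: it is a kernel in an `𝒳`-complete
projective resolution. -/
def XGorensteinProjective (R : Type u) [Ring R] (𝒳 : ModuleCat.{u} R → Prop)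
    (G : ModuleCat.{u} R) : Prop :=
  ∃ C : XCompleteResolution R 𝒳, Nonempty (G ≃ₗ[R] LinearMap.ker (C.d 0))

/-- `ResWithKernel R 𝒞 n K M` says that there is an exact sequence
`0 → K → G_{n-1} → ⋯ → G_0 → M → 0` in which every `G_i` belongs to the class `𝒞`. -/
def ResWithKernel (R : Type u) [Ring R] (𝒞 : ModuleCat.{u} R → Prop) :
    ℕ → ModuleCat.{u} R → ModuleCat.{u} R → Prop
  | 0, K, M => Nonempty (K ≃ₗ[R] M)
  | n + 1, K, M => ∃ (G L : ModuleCat.{u} R) (f : L →ₗ[R] G) (g : G →ₗ[R] M),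
      𝒞 G ∧ Function.Injective f ∧ Function.Surjective g ∧ Function.Exact f g ∧
      ResWithKernel R 𝒞 n K L

/-- The resolution dimension of `M` with respect to a class `𝒞` of modules:
the least length of a resolution of `M` by modules in `𝒞` (`⊤` if none exists). -/
noncomputable def relDim (R : Type u) [Ring R] (𝒞 : ModuleCat.{u} R → Prop)
    (M : ModuleCat.{u} R) : ℕ∞ :=
  sInf {n : ℕ∞ | ∃ m : ℕ, n = m ∧ ∃ K, 𝒞 K ∧ ResWithKernel R 𝒞 m K M}

/-- The `𝒳`-Gorenstein projective dimension of `M`. -/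
noncomputable def xGpd (R : Type u) [Ring R] (𝒳 : ModuleCat.{u} R → Prop)
    (M : ModuleCat.{u} R) : ℕ∞ :=
  relDim R (XGorensteinProjective R 𝒳) M

/-- The projective dimension of `M`. -/
noncomputable def pdim (R : Type u) [Ring R] (M : ModuleCat.{u} R) : ℕ∞ :=
  relDim R (fun N => Module.Projective R N) M

/-- The Gorenstein projective dimension of `M`:
the `𝒳`-Gorenstein projective dimension for `𝒳` the class of projective modules. -/
noncomputable def gpd (R : Type u) [Ring R] (M : ModuleCat.{u} R) : ℕ∞ :=
  xGpd R (fun N => Module.Projective R N) M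

namespace GP
open Function LinearMap

variable {R : Type u} [Ring R]

abbrev Proj (R : Type u) [Ring R] : ModuleCat.{u} R → Prop := fun N => Module.Projective R N

theorem quotKer_apply {A B : ModuleCat.{u} R} (p : A →ₗ[R] B) (hp : Surjective p) (x : A) :
    (p.quotKerEquivOfSurjective hp) (Submodule.Quotient.mk x) = p x := rfl

theorem lift_of_surjective {A B C : ModuleCat.{u} R} (p : A →ₗ[R] B) (hp : Surjective p)
    (f : A →ₗ[R] C) (h : ker p ≤ ker f) : ∃ g : B →ₗ[R] C, g ∘ₗ p = f := by
  refine ⟨((ker p).liftQ f h) ∘ₗ (p.quotKerEquivOfSurjective hp).symm.toLinearMap, ?_⟩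
  ext x
  have : (p.quotKerEquivOfSurjective hp).symm (p x) = Submodule.Quotient.mk x := by
    apply (p.quotKerEquivOfSurjective hp).injective
    simp [quotKer_apply]
  simp [this]

theorem exists_section {B P : ModuleCat.{u} R} (π : B →ₗ[R] P) (hP : Module.Projective R P)
    (hπ : Surjective π) : ∃ s : P →ₗ[R] B, π ∘ₗ s = LinearMap.id := by
  have := Module.projective_lifting_property (M := B) (N := P) π LinearMap.id hπ
  exact this

theorem split_iso {A B C : ModuleCat.{u} R} (i : A →ₗ[R] B) (π : B →ₗ[R] C)
    (hi : Injective i) (hπ : Surjective π) (hex : Function.Exact i π)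
    (hC : Module.Projective R C) :
    Nonempty (B ≃ₗ[R] ModuleCat.of R (A × C)) := by
  obtain ⟨s, hs⟩ := exists_section π hC hπ
  have hsap : ∀ c, π (s c) = c := fun c => congrArg (fun f => f c) (congrArg DFunLike.coe hs)
  have hmem : ∀ b : B, b - s (π b) ∈ range i := by
    intro b
    have : π (b - s (π b)) = 0 := by simp [map_sub, hsap]
    exact (hex (b - s (π b))).mp this
  let e := LinearEquiv.ofInjective i hi
  let r : B →ₗ[R] A :=
    e.symm.toLinearMap ∘ₗ (LinearMap.id - s ∘ₗ π).codRestrict (range i) hmem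
  have hir : ∀ b, i (r b) = b - s (π b) := by
    intro b
    have : ∀ z : range i, i (e.symm z) = z := by
      intro z
      have := e.apply_symm_apply z
      exact congrArg Subtype.val this
    exact this (((LinearMap.id - s ∘ₗ π).codRestrict (range i) hmem) b)
  refine ⟨LinearEquiv.ofLinear (LinearMap.prod r π)
    (i ∘ₗ LinearMap.fst R A C + s ∘ₗ LinearMap.snd R A C) ?_ ?_⟩
  · refine LinearMap.ext ?_
    rintro ⟨a, c⟩
    have hπx : π (i a + s c) = c := by
      simp [map_add, hsap, hex.apply_apply_eq_zero]
    have hrx : r (i a + s c) = a := by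
      apply hi
      rw [hir, hπx]
      simp
    simp only [LinearMap.comp_apply, LinearMap.add_apply, LinearMap.prod_apply, Pi.prod,
      LinearMap.fst_apply, LinearMap.snd_apply, LinearMap.id_apply]
    exact Prod.ext hrx hπx
  · ext b
    show i (r b) + s (π b) = b
    rw [hir]
    abel


variable {𝒞 : ModuleCat.{u} R → Prop}

theorem res_congr {n : ℕ} {K M M' : ModuleCat.{u} R} (e : M ≃ₗ[R] M')
    (h : ResWithKernel R 𝒞 n K M) : ResWithKernel R 𝒞 n K M' := by
  cases n with
  | zero => obtain ⟨e0⟩ := h; exact ⟨e0.trans e⟩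
  | succ n =>
    obtain ⟨G, L, f, g, hG, hf, hg, hex, hres⟩ := h
    refine ⟨G, L, f, e.toLinearMap ∘ₗ g, hG, hf, e.surjective.comp hg, ?_, hres⟩
    intro y
    simp only [LinearMap.comp_apply, LinearEquiv.coe_coe, LinearEquiv.map_eq_zero_iff]
    exact hex y

theorem res_congr_ker : ∀ {n : ℕ} {K K' M : ModuleCat.{u} R}, (K ≃ₗ[R] K') →
    ResWithKernel R 𝒞 n K M → ResWithKernel R 𝒞 n K' M := by
  intro n
  induction n with
  | zero => intro K K' M e h; obtain ⟨e0⟩ := h; exact ⟨e.symm.trans e0⟩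
  | succ n ih =>
    intro K K' M e h
    obtain ⟨G, L, f, g, hG, hf, hg, hex, hres⟩ := h
    exact ⟨G, L, f, g, hG, hf, hg, hex, ih e hres⟩

theorem res_compose : ∀ {b a : ℕ} {K' K M : ModuleCat.{u} R},
    ResWithKernel R 𝒞 a K' K → ResWithKernel R 𝒞 b K M →
    ResWithKernel R 𝒞 (a + b) K' M := by
  intro b
  induction b with
  | zero => intro a K' K M h1 h2; obtain ⟨e⟩ := h2; exact res_congr e h1
  | succ b ih =>
    intro a K' K M h1 h2
    obtain ⟨G, L, f, g, hG, hf, hg, hex, hres⟩ := h2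
    exact ⟨G, L, f, g, hG, hf, hg, hex, ih h1 hres⟩

theorem res_mono {𝒞' : ModuleCat.{u} R → Prop} (hm : ∀ N, 𝒞 N → 𝒞' N) :
    ∀ {n : ℕ} {K M : ModuleCat.{u} R},
    ResWithKernel R 𝒞 n K M → ResWithKernel R 𝒞' n K M := by
  intro n
  induction n with
  | zero => intro K M h; exact h
  | succ n ih =>
    intro K M h
    obtain ⟨G, L, f, g, hG, hf, hg, hex, hres⟩ := h
    exact ⟨G, L, f, g, hm G hG, hf, hg, hex, ih hres⟩

theorem res_pad {m : ℕ} {K L : ModuleCat.{u} R} (P : ModuleCat.{u} R)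
    (hcl : ∀ A : ModuleCat.{u} R, 𝒞 A → 𝒞 (ModuleCat.of R (A × P)))
    (h : ResWithKernel R 𝒞 (m+1) K L) :
    ResWithKernel R 𝒞 (m+1) K (ModuleCat.of R (L × P)) := by
  obtain ⟨G, L₁, f, g, hG, hf, hg, hex, hres⟩ := h
  refine ⟨ModuleCat.of R (G × P), L₁, (LinearMap.inl R G P) ∘ₗ f,
    g.prodMap LinearMap.id, hcl G hG, ?_, ?_, ?_, hres⟩
  · intro x y hxy
    apply hf
    exact congrArg Prod.fst hxy
  · rintro ⟨l, p⟩
    obtain ⟨x, hx⟩ := hg l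
    refine ⟨(x, p), ?_⟩
    show ((g x : ↑L), p) = (l, p)
    rw [hx]
  · rintro ⟨a, b⟩
    show (g a, b) = 0 ↔ _
    rw [Prod.ext_iff]
    constructor
    · rintro ⟨h1, h2⟩
      replace h1 : g a = 0 := h1
      replace h2 : b = 0 := h2
      obtain ⟨x, hx⟩ := (hex a).mp h1
      refine ⟨x, ?_⟩
      show ((f x : ↑G), (0 : ↑P)) = (a, b)
      rw [hx, h2]
    · rintro ⟨x, hx⟩
      replace hx : ((f x : ↑G), (0 : ↑P)) = (a, b) := hx
      have h1 : f x = a := congrArg Prod.fst hx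
      have h2 : (0 : ↑P) = b := congrArg Prod.snd hx
      constructor
      · show g a = 0
        rw [← h1]
        have : g (f x) = 0 := (hex (f x)).mpr ⟨x, rfl⟩
        exact this
      · exact h2.symm

theorem exists_free_pres (M : ModuleCat.{u} R) : ∃ (P : ModuleCat.{u} R) (e : P →ₗ[R] M),
    Module.Projective R P ∧ Surjective e :=
  ⟨ModuleCat.of R (M →₀ R), Finsupp.linearCombination R _root_.id,
    inferInstanceAs (Module.Projective R (↑M →₀ R)),
    Finsupp.linearCombination_id_surjective R M⟩

theorem res_one_ker {P M : ModuleCat.{u} R} (e : P →ₗ[R] M) (hP : 𝒞 P) (he : Surjective e) :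
    ResWithKernel R 𝒞 1 (ModuleCat.of R (ker e)) M := by
  refine ⟨P, ModuleCat.of R (ker e), (ker e).subtype, e, hP, Subtype.val_injective, he,
    ?_, ⟨LinearEquiv.refl R _⟩⟩
  intro y
  constructor
  · intro hy
    exact ⟨⟨y, hy⟩, rfl⟩
  · rintro ⟨⟨z, hz⟩, rfl⟩
    exact hz

theorem exists_res (M : ModuleCat.{u} R) : ∀ n : ℕ, ∃ K, ResWithKernel R (Proj R) n K M := by
  intro n
  induction n with
  | zero => exact ⟨M, ⟨LinearEquiv.refl R M⟩⟩
  | succ n ih =>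
    obtain ⟨K, hK⟩ := ih
    obtain ⟨P, e, hP, he⟩ := exists_free_pres K
    have := res_compose (res_one_ker e hP he) hK
    rw [Nat.add_comm] at this
    exact ⟨_, this⟩

theorem res_proj_proj : ∀ {j : ℕ} {K M : ModuleCat.{u} R},
    ResWithKernel R (Proj R) j K M → Module.Projective R M → Module.Projective R K := by
  intro j
  induction j with
  | zero => intro K M h hM; obtain ⟨e⟩ := h; exact Module.Projective.of_equiv e.symm
  | succ j ih =>
    intro K M h hM
    obtain ⟨G, L, f, g, hG, hf, hg, hex, hres⟩ := h
    obtain ⟨e⟩ := split_iso f g hf hg hex hM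
    haveI := hG
    haveI hLM : Module.Projective R ↑(ModuleCat.of R (↑L × ↑M)) := Module.Projective.of_equiv e
    have hL : Module.Projective R L :=
      Module.Projective.of_split (M := ModuleCat.of R (↑L × ↑M)) (LinearMap.inl R L M)
        (LinearMap.fst R L M) (by ext x; rfl)
    exact ih hres hL


/-! ### Ext1Vanish -/

theorem exists_factor_sub {A B X : ModuleCat.{u} R} (i : A →ₗ[R] B) (hi : Injective i)
    (u : X →ₗ[R] B) (hmem : ∀ x, u x ∈ range i) : ∃ κ : X →ₗ[R] A, i ∘ₗ κ = u := by
  let e := LinearEquiv.ofInjective i hi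
  refine ⟨e.symm.toLinearMap ∘ₗ u.codRestrict (range i) hmem, ?_⟩
  ext x
  show i (e.symm (u.codRestrict (range i) hmem x)) = u x
  have : ∀ z : range i, i (e.symm z) = z := fun z =>
    congrArg Subtype.val (e.apply_symm_apply z)
  simpa using this (u.codRestrict (range i) hmem x)

theorem exists_retraction {A B C : ModuleCat.{u} R} (i : A →ₗ[R] B) (π : B →ₗ[R] C)
    (hi : Injective i) (hπ : Surjective π) (hex : Function.Exact i π)
    (hC : Module.Projective R C) : ∃ r : B →ₗ[R] A, r ∘ₗ i = LinearMap.id := by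
  obtain ⟨s, hs⟩ := exists_section π hC hπ
  let t : B →ₗ[R] B := LinearMap.id - s ∘ₗ π
  have hmem : ∀ b : B, t b ∈ range i := by
    intro b
    apply (hex _).mp
    have h1 : π (s (π b)) = π b := LinearMap.congr_fun hs (π b)
    show π (b - s (π b)) = 0
    rw [map_sub, h1, sub_self]
  obtain ⟨r, hr⟩ := exists_factor_sub i hi t hmem
  refine ⟨r, ?_⟩
  ext a
  apply hi
  have h2 : i (r (i a)) = t (i a) := LinearMap.congr_fun hr (i a)
  show i (r (i a)) = i a
  rw [h2]
  show i a - s (π (i a)) = i a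
  rw [hex.apply_apply_eq_zero a, map_zero, sub_zero]

def Ext1Vanish (𝒳 : ModuleCat.{u} R → Prop) (G : ModuleCat.{u} R) : Prop :=
  ∀ (Y : ModuleCat.{u} R), 𝒳 Y → ∀ (A B : ModuleCat.{u} R) (i : A →ₗ[R] B) (π : B →ₗ[R] G),
    Injective i → Surjective π → Function.Exact i π →
    ∀ φ : A →ₗ[R] Y, ∃ β : B →ₗ[R] Y, β ∘ₗ i = φ

variable {𝒳 : ModuleCat.{u} R → Prop}

theorem ev_congr {G G' : ModuleCat.{u} R} (e : G ≃ₗ[R] G') (h : Ext1Vanish 𝒳 G) :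
    Ext1Vanish 𝒳 G' := by
  intro Y hY A B i π hi hπ hex φ
  refine h Y hY A B i (e.symm.toLinearMap ∘ₗ π) hi (e.symm.surjective.comp hπ) ?_ φ
  intro y
  simp only [LinearMap.comp_apply, LinearEquiv.coe_coe, LinearEquiv.map_eq_zero_iff]
  exact hex y

theorem ev_of_projective {G : ModuleCat.{u} R} (hG : Module.Projective R G) :
    Ext1Vanish 𝒳 G := by
  intro Y hY A B i π hi hπ hex φ
  obtain ⟨r, hr⟩ := exists_retraction i π hi hπ hex hG
  exact ⟨φ ∘ₗ r, by rw [LinearMap.comp_assoc, hr, LinearMap.comp_id]⟩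

theorem ev_sum {A P : ModuleCat.{u} R} (hA : Ext1Vanish 𝒳 A) (hP : Module.Projective R P) :
    Ext1Vanish 𝒳 (ModuleCat.of R (A × P)) := by
  intro Y hY X W i π hi hπ hex φ
  let q : W →ₗ[R] P := (LinearMap.snd R A P) ∘ₗ π
  let WA : Submodule R W := ker q
  have hiWA : ∀ x : X, i x ∈ WA := by
    intro x
    show (π (i x)).2 = 0
    rw [hex.apply_apply_eq_zero x]
    rfl
  let iWA : X →ₗ[R] ModuleCat.of R WA := i.codRestrict WA hiWA
  let πA : (ModuleCat.of R WA) →ₗ[R] A := (LinearMap.fst R A P) ∘ₗ π ∘ₗ WA.subtype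
  have hπA : Surjective πA := by
    intro a
    obtain ⟨w, hw⟩ := hπ (a, 0)
    have hwWA : w ∈ WA := by show (π w).2 = 0; rw [hw]
    refine ⟨⟨w, hwWA⟩, ?_⟩
    show (π w).1 = a
    rw [hw]
  have hexA : Function.Exact iWA πA := by
    rintro ⟨w, hw⟩
    constructor
    · intro h0
      have hπw : π w = 0 := Prod.ext h0 hw
      obtain ⟨x, hx⟩ := (hex w).mp hπw
      exact ⟨x, Subtype.ext hx⟩
    · rintro ⟨x, hx⟩
      have hwx : w = i x := (congrArg Subtype.val hx).symm
      show (π w).1 = 0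
      rw [hwx, hex.apply_apply_eq_zero x]
      rfl
  have hiWAinj : Injective iWA := fun x y hxy => hi (congrArg Subtype.val hxy)
  obtain ⟨β₁, hβ₁⟩ := hA Y hY X (ModuleCat.of R WA) iWA πA hiWAinj hπA hexA φ
  have hqsurj : Surjective q := by
    intro p
    obtain ⟨w, hw⟩ := hπ (0, p)
    refine ⟨w, ?_⟩
    show (π w).2 = p
    rw [hw]
  obtain ⟨s, hs⟩ := exists_section q hP hqsurj
  let t : W →ₗ[R] W := LinearMap.id - s ∘ₗ q
  have hmem : ∀ w : W, t w ∈ WA := by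
    intro w
    show q (w - s (q w)) = 0
    have h1 : q (s (q w)) = q w := LinearMap.congr_fun hs (q w)
    rw [map_sub, h1, sub_self]
  let ρ : W →ₗ[R] ModuleCat.of R WA := t.codRestrict WA hmem
  refine ⟨β₁ ∘ₗ ρ, ?_⟩
  ext x
  show β₁ (ρ (i x)) = φ x
  have hρ : ρ (i x) = iWA x := by
    apply Subtype.ext
    show i x - s (q (i x)) = i x
    have h0 : q (i x) = 0 := hiWA x
    rw [h0, map_zero, sub_zero]
  rw [hρ]
  exact LinearMap.congr_fun hβ₁ x

theorem ev_summand {A B : ModuleCat.{u} R} (h : Ext1Vanish 𝒳 (ModuleCat.of R (A × B))) :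
    Ext1Vanish 𝒳 A := by
  intro Y hY X W i π hi hπ hex φ
  have hex' : Function.Exact ((LinearMap.inl R W B) ∘ₗ i) (π.prodMap LinearMap.id) := by
    rintro ⟨w, b⟩
    show ((π w : ↑A), b) = 0 ↔ _
    rw [Prod.ext_iff]
    constructor
    · rintro ⟨h1, h2⟩
      replace h1 : π w = 0 := h1
      replace h2 : b = 0 := h2
      obtain ⟨x, hx⟩ := (hex w).mp h1
      refine ⟨x, ?_⟩
      show ((i x : ↑W), (0 : ↑B)) = (w, b)
      rw [hx, h2]
    · rintro ⟨x, hx⟩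
      replace hx : ((i x : ↑W), (0 : ↑B)) = (w, b) := hx
      have h1 : i x = w := congrArg Prod.fst hx
      have h2 : (0 : ↑B) = b := congrArg Prod.snd hx
      exact ⟨by show π w = 0; rw [← h1]; exact hex.apply_apply_eq_zero x, h2.symm⟩
  obtain ⟨β', hβ'⟩ := h Y hY X (ModuleCat.of R (W × B)) ((LinearMap.inl R W B) ∘ₗ i)
    (π.prodMap LinearMap.id)
    (fun x y hxy => hi (congrArg Prod.fst hxy))
    (by rintro ⟨a, b⟩; obtain ⟨w, hw⟩ := hπ a;
        exact ⟨(w, b), by show ((π w : ↑A), b) = (a, b); rw [hw]⟩)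
    hex' φ
  refine ⟨β' ∘ₗ LinearMap.inl R W B, ?_⟩
  ext x
  exact LinearMap.congr_fun hβ' x

theorem ev_ext {U M V : ModuleCat.{u} R} (ιU : U →ₗ[R] M) (pV : M →ₗ[R] V)
    (hιU : Injective ιU) (hpV : Surjective pV) (hexUV : Function.Exact ιU pV)
    (hU : Ext1Vanish 𝒳 U) (hV : Ext1Vanish 𝒳 V) : Ext1Vanish 𝒳 M := by
  intro Y hY X W i π hi hπ hex φ
  let q : W →ₗ[R] V := pV ∘ₗ π
  let WU : Submodule R W := ker q
  have hiWU : ∀ x : X, i x ∈ WU := by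
    intro x
    show pV (π (i x)) = 0
    rw [hex.apply_apply_eq_zero x, map_zero]
  let iWU : X →ₗ[R] ModuleCat.of R WU := i.codRestrict WU hiWU
  let π' : (ModuleCat.of R WU) →ₗ[R] M := π ∘ₗ WU.subtype
  have hmem : ∀ z, π' z ∈ range ιU := by
    rintro ⟨w, hw⟩
    exact (hexUV (π w)).mp hw
  obtain ⟨πU, hπUc⟩ := exists_factor_sub ιU hιU π' hmem
  have hπUap : ∀ z, ιU (πU z) = π z.1 := fun z => LinearMap.congr_fun hπUc z
  have hπUsurj : Surjective πU := by
    intro u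
    obtain ⟨w, hw⟩ := hπ (ιU u)
    have hwWU : w ∈ WU := by
      show pV (π w) = 0
      rw [hw, hexUV.apply_apply_eq_zero u]
    refine ⟨⟨w, hwWU⟩, hιU ?_⟩
    rw [hπUap ⟨w, hwWU⟩]
    exact hw
  have hexWU : Function.Exact iWU πU := by
    rintro ⟨w, hw⟩
    constructor
    · intro h0
      have : π w = 0 := by
        have := hπUap ⟨w, hw⟩
        rw [h0, map_zero] at this
        exact this.symm
      obtain ⟨x, hx⟩ := (hex w).mp this
      exact ⟨x, Subtype.ext hx⟩
    · rintro ⟨x, hx⟩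
      have hwx : w = i x := (congrArg Subtype.val hx).symm
      apply hιU
      rw [hπUap ⟨w, hw⟩, map_zero]
      show π w = 0
      rw [hwx]
      exact hex.apply_apply_eq_zero x
  obtain ⟨β₁, hβ₁⟩ := hU Y hY X (ModuleCat.of R WU) iWU πU
    (fun x y hxy => hi (congrArg Subtype.val hxy)) hπUsurj hexWU φ
  have hqsurj : Surjective q := by
    intro v
    obtain ⟨m, hm⟩ := hpV v
    obtain ⟨w, hw⟩ := hπ m
    exact ⟨w, by show pV (π w) = v; rw [hw, hm]⟩
  have hexq : Function.Exact (WU.subtype : WU →ₗ[R] W) q := by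
    intro w
    constructor
    · intro h0
      exact ⟨⟨w, h0⟩, rfl⟩
    · rintro ⟨⟨z, hz⟩, rfl⟩
      exact hz
  obtain ⟨β, hβ⟩ := hV Y hY (ModuleCat.of R WU) W WU.subtype q
    Subtype.val_injective hqsurj hexq β₁
  refine ⟨β, ?_⟩
  ext x
  show β (i x) = φ x
  have h1 : β (WU.subtype ⟨i x, hiWU x⟩) = β₁ ⟨i x, hiWU x⟩ := LinearMap.congr_fun hβ _
  have h2 : β₁ (iWU x) = φ x := LinearMap.congr_fun hβ₁ x
  exact h1.trans h2

theorem ev_of_pres {G K P : ModuleCat.{u} R} (ι : K →ₗ[R] P) (p : P →ₗ[R] G)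
    (hP : Module.Projective R P) (hι : Injective ι) (hp : Surjective p)
    (hex : Function.Exact ι p)
    (hext : ∀ Y, 𝒳 Y → ∀ φ : K →ₗ[R] Y, ∃ ψ : P →ₗ[R] Y, ψ ∘ₗ ι = φ) :
    Ext1Vanish 𝒳 G := by
  intro Y hY A B i π hi hπ hexi φ
  obtain ⟨L, hL⟩ := Module.projective_lifting_property (M := B) (N := G) π p hπ
  have hLap : ∀ x, π (L x) = p x := fun x => LinearMap.congr_fun hL x
  have hmem : ∀ k : K, L (ι k) ∈ range i := by
    intro k
    apply (hexi _).mp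
    rw [hLap (ι k), hex.apply_apply_eq_zero k]
  obtain ⟨κ, hκc⟩ := exists_factor_sub i hi (L ∘ₗ ι) hmem
  have hκap : ∀ k, i (κ k) = L (ι k) := fun k => LinearMap.congr_fun hκc k
  obtain ⟨ψ, hψ⟩ := hext Y hY (φ ∘ₗ κ)
  have hψap : ∀ k, ψ (ι k) = φ (κ k) := fun k => LinearMap.congr_fun hψ k
  let e' : (ModuleCat.of R (P × A)) →ₗ[R] B := L ∘ₗ LinearMap.fst R P A + i ∘ₗ LinearMap.snd R P A
  have he'ap : ∀ z : ↑P × ↑A, e' z = L z.1 + i z.2 := fun z => rfl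
  have he'surj : Surjective e' := by
    intro b
    obtain ⟨x, hx⟩ := hp (π b)
    have : π (b - L x) = 0 := by rw [map_sub, hLap x, hx, sub_self]
    obtain ⟨a, ha⟩ := (hexi _).mp this
    refine ⟨(x, a), ?_⟩
    rw [he'ap (x, a)]
    show L x + i a = b
    rw [ha]
    abel
  let f : (ModuleCat.of R (P × A)) →ₗ[R] Y := ψ ∘ₗ LinearMap.fst R P A + φ ∘ₗ LinearMap.snd R P A
  have hker : ker e' ≤ ker f := by
    rintro ⟨x, a⟩ hxa
    have hxa' : L x + i a = 0 := hxa
    have hpx : p x = 0 := by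
      have h1 : π (L x + i a) = 0 := by rw [hxa', map_zero]
      rw [map_add, hLap x, hexi.apply_apply_eq_zero a, add_zero] at h1
      exact h1
    obtain ⟨k, hk⟩ := (hex x).mp hpx
    have hia : i a = - L (ι k) := by
      rw [← hk] at hxa'
      exact eq_neg_of_add_eq_zero_right hxa'
    have ha : a = - κ k := by
      apply hi
      rw [hia, map_neg, hκap k]
    show ψ x + φ a = 0
    rw [← hk, hψap k, ha, map_neg, add_neg_cancel]
  obtain ⟨β, hβ⟩ := lift_of_surjective e' he'surj f hker
  refine ⟨β, ?_⟩
  ext a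
  have h1 : β (e' (0, a)) = f (0, a) := LinearMap.congr_fun hβ (0, a)
  have h2 : e' ((0 : ↑P), a) = i a := by rw [he'ap (0, a)]; show L 0 + i a = i a; rw [map_zero, zero_add]
  show β (i a) = φ a
  rw [← h2, h1]
  show ψ 0 + φ a = φ a
  rw [map_zero, zero_add]

/-! ### Pullbacks and Schanuel -/

section PB
variable {A B C : ModuleCat.{u} R} (f : A →ₗ[R] C) (g : B →ₗ[R] C)

noncomputable def pbSub : Submodule R (ModuleCat.of R (A × B)) :=
  ker (f ∘ₗ LinearMap.fst R A B - g ∘ₗ LinearMap.snd R A B)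

theorem pb_mem {a : A} {b : B} : (a, b) ∈ pbSub f g ↔ f a = g b := by
  show f a - g b = 0 ↔ _
  exact sub_eq_zero

noncomputable def pbMod : ModuleCat.{u} R := ModuleCat.of R (pbSub f g)

noncomputable def pbPr1 : pbMod f g →ₗ[R] A := (LinearMap.fst R A B) ∘ₗ (pbSub f g).subtype

noncomputable def pbPr2 : pbMod f g →ₗ[R] B := (LinearMap.snd R A B) ∘ₗ (pbSub f g).subtype

theorem pbPr1_surj (hg : Surjective g) : Surjective (pbPr1 f g) := by
  intro a
  obtain ⟨b, hb⟩ := hg (f a)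
  exact ⟨⟨(a, b), (pb_mem f g).mpr hb.symm⟩, rfl⟩

theorem pbPr2_surj (hf : Surjective f) : Surjective (pbPr2 f g) := by
  intro b
  obtain ⟨a, ha⟩ := hf (g b)
  exact ⟨⟨(a, b), (pb_mem f g).mpr ha⟩, rfl⟩

variable {L L' : ModuleCat.{u} R} (fL : L →ₗ[R] A) (gL : L' →ₗ[R] B)

noncomputable def pbJ1 (hexL : Function.Exact fL f) : L →ₗ[R] pbMod f g :=
  ((LinearMap.inl R A B) ∘ₗ fL).codRestrict (pbSub f g)
    (fun l => (pb_mem f g).mpr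
      (by show f (fL l) = g 0; rw [hexL.apply_apply_eq_zero l, map_zero]))

theorem pbJ1_inj (hexL : Function.Exact fL f) (h : Injective fL) :
    Injective (pbJ1 f g fL hexL) := by
  intro x y hxy
  exact h (congrArg Prod.fst (congrArg Subtype.val hxy))

theorem pb_exact1 (hexL : Function.Exact fL f) :
    Function.Exact (pbJ1 f g fL hexL) (pbPr2 f g) := by
  rintro ⟨⟨a, b⟩, hab⟩
  constructor
  · intro h0
    replace h0 : b = 0 := h0
    have hfa : f a = 0 := by
      have := (pb_mem f g).mp hab
      rw [this, h0, map_zero]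
    obtain ⟨l, hl⟩ := (hexL a).mp hfa
    refine ⟨l, Subtype.ext ?_⟩
    show ((fL l : ↑A), (0 : ↑B)) = (a, b)
    rw [hl, h0]
  · rintro ⟨l, hl⟩
    have := congrArg Prod.snd (congrArg Subtype.val hl)
    exact this.symm

noncomputable def pbJ2 (hexL' : Function.Exact gL g) : L' →ₗ[R] pbMod f g :=
  ((LinearMap.inr R A B) ∘ₗ gL).codRestrict (pbSub f g)
    (fun l => (pb_mem f g).mpr
      (by show f 0 = g (gL l); rw [hexL'.apply_apply_eq_zero l, map_zero]))

theorem pbJ2_inj (hexL' : Function.Exact gL g) (h : Injective gL) :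
    Injective (pbJ2 f g gL hexL') := by
  intro x y hxy
  exact h (congrArg Prod.snd (congrArg Subtype.val hxy))

theorem pb_exact2 (hexL' : Function.Exact gL g) :
    Function.Exact (pbJ2 f g gL hexL') (pbPr1 f g) := by
  rintro ⟨⟨a, b⟩, hab⟩
  constructor
  · intro h0
    replace h0 : a = 0 := h0
    have hgb : g b = 0 := by
      have := (pb_mem f g).mp hab
      rw [← this, h0, map_zero]
    obtain ⟨l, hl⟩ := (hexL' b).mp hgb
    refine ⟨l, Subtype.ext ?_⟩
    show ((0 : ↑A), (gL l : ↑B)) = (a, b)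
    rw [hl, h0]
  · rintro ⟨l, hl⟩
    have := congrArg Prod.fst (congrArg Subtype.val hl)
    exact this.symm

end PB

theorem schanuel {M L L' P P' : ModuleCat.{u} R}
    (fL : L →ₗ[R] P) (p : P →ₗ[R] M) (hfL : Injective fL) (hp : Surjective p)
    (hexL : Function.Exact fL p) (hP : Module.Projective R P)
    (fL' : L' →ₗ[R] P') (p' : P' →ₗ[R] M) (hfL' : Injective fL') (hp' : Surjective p')
    (hexL' : Function.Exact fL' p') (hP' : Module.Projective R P') :
    Nonempty ((ModuleCat.of R (L × P')) ≃ₗ[R] ModuleCat.of R (L' × P)) := by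
  obtain ⟨e1⟩ := split_iso (pbJ1 p p' fL hexL) (pbPr2 p p')
    (pbJ1_inj p p' fL hexL hfL) (pbPr2_surj p p' hp) (pb_exact1 p p' fL hexL) hP'
  obtain ⟨e2⟩ := split_iso (pbJ2 p p' fL' hexL') (pbPr1 p p')
    (pbJ2_inj p p' fL' hexL' hfL') (pbPr1_surj p p' hp') (pb_exact2 p p' fL' hexL') hP
  exact ⟨e1.symm.trans e2⟩

/-! ### generic syzygy transfer -/

theorem transfer (Φ : ModuleCat.{u} R → Prop)
    (hiso : ∀ {A B : ModuleCat.{u} R}, (A ≃ₗ[R] B) → Φ A → Φ B)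
    (hsum : ∀ (A P : ModuleCat.{u} R), Module.Projective R P →
      (Φ A ↔ Φ (ModuleCat.of R (A × P)))) :
    ∀ {n : ℕ} {M K K' : ModuleCat.{u} R}, ResWithKernel R (Proj R) n K M →
      ResWithKernel R (Proj R) n K' M → (Φ K ↔ Φ K') := by
  intro n
  induction n with
  | zero =>
    intro M K K' h h'
    obtain ⟨e⟩ := h
    obtain ⟨e'⟩ := h'
    exact ⟨fun hK => hiso (e.trans e'.symm) hK, fun hK => hiso (e'.trans e.symm) hK⟩
  | succ n ih =>
    intro M K K' h h'
    obtain ⟨P, Lm, fm, gm, hPp, hfm, hgm, hexm, hres⟩ := h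
    obtain ⟨P', Lm', fm', gm', hPp', hfm', hgm', hexm', hres'⟩ := h'
    obtain ⟨e⟩ := schanuel fm gm hfm hgm hexm hPp fm' gm' hfm' hgm' hexm' hPp'
    cases n with
    | zero =>
      obtain ⟨eK⟩ := hres
      obtain ⟨eK'⟩ := hres'
      constructor
      · intro hK
        apply hiso eK'.symm
        apply (hsum Lm' P hPp).mpr
        apply hiso e
        apply (hsum Lm P' hPp').mp
        exact hiso eK hK
      · intro hK'
        apply hiso eK.symm
        apply (hsum Lm P' hPp').mpr
        apply hiso e.symm
        apply (hsum Lm' P hPp).mp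
        exact hiso eK' hK'
    | succ m =>
      have hcl' : ∀ A : ModuleCat.{u} R, Proj R A → Proj R (ModuleCat.of R (A × P')) := by
        intro A hA
        haveI := hA; haveI := hPp'
        exact inferInstanceAs (Module.Projective R (↑A × ↑P'))
      have hcl : ∀ A : ModuleCat.{u} R, Proj R A → Proj R (ModuleCat.of R (A × P)) := by
        intro A hA
        haveI := hA; haveI := hPp
        exact inferInstanceAs (Module.Projective R (↑A × ↑P))
      have hK1 : ResWithKernel R (Proj R) (m+1) K (ModuleCat.of R (Lm × P')) :=
        res_pad P' hcl' hres
      have hK2 : ResWithKernel R (Proj R) (m+1) K (ModuleCat.of R (Lm' × P)) :=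
        res_congr e hK1
      have hK' : ResWithKernel R (Proj R) (m+1) K' (ModuleCat.of R (Lm' × P)) :=
        res_pad P hcl hres'
      exact ih hK2 hK'

theorem ev_transfer {n : ℕ} {M K K' : ModuleCat.{u} R}
    (h : ResWithKernel R (Proj R) n K M) (h' : ResWithKernel R (Proj R) n K' M) :
    Ext1Vanish 𝒳 K ↔ Ext1Vanish 𝒳 K' := by
  refine transfer (Ext1Vanish 𝒳) (fun e hA => ev_congr e hA) ?_ h h'
  intro A P hP
  exact ⟨fun hA => ev_sum hA hP, fun hAP => ev_summand hAP⟩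


/-! ### LeftGood and IsGP -/

theorem res_one {A B G : ModuleCat.{u} R} {𝒞 : ModuleCat.{u} R → Prop}
    (i : A →ₗ[R] B) (π : B →ₗ[R] G) (hB : 𝒞 B) (hi : Injective i) (hπ : Surjective π)
    (hex : Function.Exact i π) : ResWithKernel R 𝒞 1 A G :=
  ⟨B, A, i, π, hB, hi, hπ, hex, ⟨LinearEquiv.refl R A⟩⟩

def LeftGood (𝒳 : ModuleCat.{u} R → Prop) (G : ModuleCat.{u} R) : Prop :=
  ∀ (j : ℕ) (K : ModuleCat.{u} R), ResWithKernel R (Proj R) j K G → Ext1Vanish 𝒳 K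

structure RChain (𝒳 : ModuleCat.{u} R → Prop) (G : ModuleCat.{u} R) where
  C : ℕ → ModuleCat.{u} R
  Q : ℕ → ModuleCat.{u} R
  ι : ∀ n, C n →ₗ[R] Q n
  p : ∀ n, Q n →ₗ[R] C (n+1)
  proj : ∀ n, Module.Projective R (Q n)
  inj : ∀ n, Injective (ι n)
  surj : ∀ n, Surjective (p n)
  exact : ∀ n, Function.Exact (ι n) (p n)
  ev : ∀ n, Ext1Vanish 𝒳 (C n)
  e0 : C 0 ≃ₗ[R] G

def IsGP (𝒳 : ModuleCat.{u} R → Prop) (G : ModuleCat.{u} R) : Prop :=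
  LeftGood 𝒳 G ∧ Nonempty (RChain 𝒳 G)

theorem lg_congr {G G' : ModuleCat.{u} R} (e : G ≃ₗ[R] G') (h : LeftGood 𝒳 G) :
    LeftGood 𝒳 G' := fun j K hres => h j K (res_congr e.symm hres)

theorem lg_ev {G : ModuleCat.{u} R} (h : LeftGood 𝒳 G) : Ext1Vanish 𝒳 G :=
  h 0 G ⟨LinearEquiv.refl R G⟩

theorem lg_of_projective {G : ModuleCat.{u} R} (hG : Module.Projective R G) :
    LeftGood 𝒳 G := fun _ _ hres => ev_of_projective (res_proj_proj hres hG)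

theorem gp_congr {G G' : ModuleCat.{u} R} (e : G ≃ₗ[R] G') (h : IsGP 𝒳 G) : IsGP 𝒳 G' := by
  obtain ⟨hlg, ⟨ch⟩⟩ := h
  exact ⟨lg_congr e hlg, ⟨{ ch with e0 := ch.e0.trans e }⟩⟩

theorem gp_of_projective {G : ModuleCat.{u} R} (hG : Module.Projective R G) : IsGP 𝒳 G := by
  refine ⟨lg_of_projective hG, ⟨?_⟩⟩
  have hzero : Module.Projective R (ModuleCat.of R PUnit.{u+1}) :=
    inferInstanceAs (Module.Projective R PUnit.{u+1})
  refine {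
    C := fun n => match n with | 0 => G | _+1 => ModuleCat.of R PUnit.{u+1}
    Q := fun n => match n with | 0 => G | _+1 => ModuleCat.of R PUnit.{u+1}
    ι := fun n => match n with | 0 => LinearMap.id | _+1 => LinearMap.id
    p := fun n => match n with | 0 => 0 | _+1 => 0
    proj := fun n => match n with | 0 => hG | _+1 => hzero
    inj := fun n => match n with
      | 0 => fun x y hxy => hxy
      | _+1 => fun x y hxy => hxy
    surj := fun n => match n with
      | 0 => fun y => ⟨0, Subsingleton.elim _ _⟩
      | _+1 => fun y => ⟨0, Subsingleton.elim _ _⟩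
    exact := fun n => match n with
      | 0 => fun c => ⟨fun _ => ⟨c, rfl⟩, fun _ => rfl⟩
      | _+1 => fun c => ⟨fun _ => ⟨c, rfl⟩, fun _ => rfl⟩
    ev := fun n => match n with
      | 0 => ev_of_projective hG
      | _+1 => ev_of_projective hzero
    e0 := LinearEquiv.refl R G }

theorem lg_kernel {K P G : ModuleCat.{u} R} (ι : K →ₗ[R] P) (p : P →ₗ[R] G)
    (hP : Module.Projective R P) (hι : Injective ι) (hp : Surjective p)
    (hex : Function.Exact ι p) (hG : LeftGood 𝒳 G) : LeftGood 𝒳 K := by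
  intro j K₀ h
  exact hG (j+1) K₀ (res_compose h (res_one ι p hP hι hp hex))

theorem lg_cokernel {K P G : ModuleCat.{u} R} (ι : K →ₗ[R] P) (p : P →ₗ[R] G)
    (hP : Module.Projective R P) (hι : Injective ι) (hp : Surjective p)
    (hex : Function.Exact ι p) (hK : LeftGood 𝒳 K) (hev : Ext1Vanish 𝒳 G) :
    LeftGood 𝒳 G := by
  intro j K₀ h
  cases j with
  | zero => obtain ⟨e⟩ := h; exact ev_congr e.symm hev
  | succ m =>
    obtain ⟨Km, hKm⟩ := exists_res K m
    have h2 : ResWithKernel R (Proj R) (m+1) Km G :=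
      res_compose hKm (res_one ι p hP hι hp hex)
    exact (ev_transfer h h2).mpr (hK m Km hKm)

theorem ev_ker {A B G : ModuleCat.{u} R} (i : A →ₗ[R] B) (π : B →ₗ[R] G)
    (hi : Injective i) (hπ : Surjective π) (hex : Function.Exact i π)
    (hB : Ext1Vanish 𝒳 B)
    {S P' : ModuleCat.{u} R} (ιS : S →ₗ[R] P') (pS : P' →ₗ[R] G)
    (hP' : Module.Projective R P') (hιS : Injective ιS) (hpS : Surjective pS)
    (hexS : Function.Exact ιS pS) (hS : Ext1Vanish 𝒳 S) :
    Ext1Vanish 𝒳 A := by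
  obtain ⟨P, eB, hPproj, heB⟩ := exists_free_pres B
  let q : P →ₗ[R] G := π ∘ₗ eB
  have hq : Surjective q := hπ.comp heB
  let PA : Submodule R P := ker q
  let KP : Submodule R P := ker eB
  have hKPA : ∀ k : KP, (k : ↑P) ∈ PA := by
    rintro ⟨k, hk⟩
    show π (eB k) = 0
    rw [show eB k = 0 from hk, map_zero]
  have hexq : Function.Exact (PA.subtype : PA →ₗ[R] P) q := by
    intro w
    exact ⟨fun h0 => ⟨⟨w, h0⟩, rfl⟩, by rintro ⟨⟨z, hz⟩, rfl⟩; exact hz⟩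
  have hexeB : Function.Exact (KP.subtype : KP →ₗ[R] P) eB := by
    intro w
    exact ⟨fun h0 => ⟨⟨w, h0⟩, rfl⟩, by rintro ⟨⟨z, hz⟩, rfl⟩; exact hz⟩
  -- Ext1Vanish of PA by comparison with S
  have hevPA : Ext1Vanish 𝒳 (ModuleCat.of R PA) := by
    refine (ev_transfer (res_one ιS pS hP' hιS hpS hexS) ?_).mp hS
    exact res_one (PA.subtype) q hPproj Subtype.val_injective hq hexq
  -- the map pA : PA → A
  have hmemA : ∀ z : ModuleCat.of R PA, (eB ∘ₗ PA.subtype) z ∈ range i := by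
    rintro ⟨z, hz⟩
    exact (hex (eB z)).mp hz
  obtain ⟨pA, hpAc⟩ := exists_factor_sub (X := ModuleCat.of R PA) i hi (eB ∘ₗ PA.subtype) hmemA
  have hpAap : ∀ z, i (pA z) = eB (PA.subtype z) := fun z => LinearMap.congr_fun hpAc z
  have hpAsurj : Surjective pA := by
    intro a
    obtain ⟨x, hx⟩ := heB (i a)
    have hxPA : x ∈ PA := by
      show π (eB x) = 0
      rw [hx, hex.apply_apply_eq_zero a]
    refine ⟨⟨x, hxPA⟩, hi ?_⟩
    rw [hpAap ⟨x, hxPA⟩]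
    exact hx
  -- jK : KP → PA
  let jK : (ModuleCat.of R KP) →ₗ[R] ModuleCat.of R PA := (KP.subtype).codRestrict PA hKPA
  have hexjK : Function.Exact jK pA := by
    rintro ⟨z, hz⟩
    constructor
    · intro h0
      have heBz : eB z = 0 := by
        have := hpAap ⟨z, hz⟩
        rw [h0, map_zero] at this
        exact this.symm
      exact ⟨⟨z, heBz⟩, Subtype.ext rfl⟩
    · rintro ⟨⟨k, hk⟩, hkk⟩
      have hzk : z = k := (congrArg Subtype.val hkk).symm
      apply hi
      rw [hpAap ⟨z, hz⟩, map_zero]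
      show eB z = 0
      rw [hzk]
      exact hk
  -- main argument
  intro Y hY X W iW πW hiW hπW hexW φ
  obtain ⟨u, hu⟩ := hevPA Y hY X (pbMod πW pA) (pbJ1 πW pA iW hexW) (pbPr2 πW pA)
    (pbJ1_inj πW pA iW hexW hiW) (pbPr2_surj πW pA hπW) (pb_exact1 πW pA iW hexW) φ
  have huap : ∀ x, u (pbJ1 πW pA iW hexW x) = φ x := fun x => LinearMap.congr_fun hu x
  obtain ⟨v, hv⟩ := hB Y hY (ModuleCat.of R KP) P (KP.subtype) eB Subtype.val_injective heB
    hexeB (u ∘ₗ pbJ2 πW pA jK hexjK)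
  have hvap : ∀ k, v (KP.subtype k) = u (pbJ2 πW pA jK hexjK k) := fun k =>
    LinearMap.congr_fun hv k
  let u' : pbMod πW pA →ₗ[R] Y := u - v ∘ₗ PA.subtype ∘ₗ pbPr2 πW pA
  have hker : ker (pbPr1 πW pA) ≤ ker u' := by
    intro z hz
    have hz' : pbPr1 πW pA z = 0 := hz
    obtain ⟨k, hk⟩ := (pb_exact2 πW pA jK hexjK z).mp hz'
    show u' z = 0
    rw [← hk]
    show u (pbJ2 πW pA jK hexjK k) - v (PA.subtype (pbPr2 πW pA (pbJ2 πW pA jK hexjK k))) = 0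
    have h2 : PA.subtype (pbPr2 πW pA (pbJ2 πW pA jK hexjK k)) = KP.subtype k := rfl
    rw [h2, hvap k, sub_self]
  obtain ⟨β, hβ⟩ := lift_of_surjective (pbPr1 πW pA) (pbPr1_surj πW pA hpAsurj) u' hker
  refine ⟨β, ?_⟩
  ext x
  show β (iW x) = φ x
  have h1 : β (pbPr1 πW pA (pbJ1 πW pA iW hexW x)) = u' (pbJ1 πW pA iW hexW x) :=
    LinearMap.congr_fun hβ _
  have h2 : pbPr1 πW pA (pbJ1 πW pA iW hexW x) = iW x := rfl
  rw [h2] at h1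
  rw [h1]
  show u (pbJ1 πW pA iW hexW x) - v (PA.subtype (pbPr2 πW pA (pbJ1 πW pA iW hexW x))) = φ x
  have h3 : PA.subtype (pbPr2 πW pA (pbJ1 πW pA iW hexW x)) = 0 := rfl
  rw [h3, map_zero, sub_zero, huap x]


/-! ### Horseshoe -/

theorem ker_exact {A B : ModuleCat.{u} R} (f : A →ₗ[R] B) :
    Function.Exact ((ker f).subtype : ker f →ₗ[R] A) f :=
  fun w => ⟨fun h0 => ⟨⟨w, h0⟩, rfl⟩, by rintro ⟨⟨z, hz⟩, rfl⟩; exact hz⟩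

theorem horseshoe_step {A B G : ModuleCat.{u} R} (i : A →ₗ[R] B) (π : B →ₗ[R] G)
    (hi : Injective i) (hπ : Surjective π) (hex : Function.Exact i π) :
    ∃ (A' B' G' : ModuleCat.{u} R) (iK : A' →ₗ[R] B') (πK : B' →ₗ[R] G'),
      Injective iK ∧ Surjective πK ∧ Function.Exact iK πK ∧
      ResWithKernel R (Proj R) 1 A' A ∧ ResWithKernel R (Proj R) 1 B' B ∧
      ResWithKernel R (Proj R) 1 G' G := by
  obtain ⟨P, eA, hPproj, heA⟩ := exists_free_pres A
  obtain ⟨Q, eG, hQproj, heG⟩ := exists_free_pres G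
  obtain ⟨l, hl⟩ := Module.projective_lifting_property (M := B) (N := G) π eG hπ
  have hlap : ∀ x, π (l x) = eG x := fun x => LinearMap.congr_fun hl x
  let eB : (ModuleCat.of R (P × Q)) →ₗ[R] B :=
    i ∘ₗ eA ∘ₗ LinearMap.fst R P Q + l ∘ₗ LinearMap.snd R P Q
  have heBap : ∀ z : ↑P × ↑Q, eB z = i (eA z.1) + l z.2 := fun z => rfl
  have heB : Surjective eB := by
    intro b
    obtain ⟨q0, hq0⟩ := heG (π b)
    have : π (b - l q0) = 0 := by rw [map_sub, hlap q0, hq0, sub_self]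
    obtain ⟨a, ha⟩ := (hex _).mp this
    obtain ⟨x, hx⟩ := heA a
    refine ⟨(x, q0), ?_⟩
    rw [heBap (x, q0)]
    show i (eA x) + l q0 = b
    rw [hx, ha]
    abel
  have hPQproj : Module.Projective R (ModuleCat.of R (↑P × ↑Q)) := by
    haveI := hPproj; haveI := hQproj
    exact inferInstanceAs (Module.Projective R (↑P × ↑Q))
  have hmemiK : ∀ z : ker eA, (LinearMap.inl R P Q) ((ker eA).subtype z) ∈ ker eB := by
    rintro ⟨x, hx⟩
    show eB (x, 0) = 0
    rw [heBap (x, 0)]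
    show i (eA x) + l 0 = 0
    rw [show eA x = 0 from hx, map_zero, map_zero, add_zero]
  have hmemπK : ∀ z : ker eB, (LinearMap.snd R P Q) ((ker eB).subtype z) ∈ ker eG := by
    rintro ⟨⟨x, q0⟩, hz⟩
    show eG q0 = 0
    have h1 : π (eB (x, q0)) = 0 := by rw [show eB (x, q0) = 0 from hz, map_zero]
    rw [heBap (x, q0)] at h1
    rw [map_add, hex.apply_apply_eq_zero (eA x), hlap q0, zero_add] at h1
    exact h1
  let iK : (ModuleCat.of R (ker eA)) →ₗ[R] ModuleCat.of R (ker eB) :=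
    ((LinearMap.inl R P Q) ∘ₗ (ker eA).subtype).codRestrict (ker eB) hmemiK
  let πK : (ModuleCat.of R (ker eB)) →ₗ[R] ModuleCat.of R (ker eG) :=
    ((LinearMap.snd R P Q) ∘ₗ (ker eB).subtype).codRestrict (ker eG) hmemπK
  have hiK : Injective iK := by
    intro z w hzw
    apply Subtype.ext
    exact congrArg Prod.fst (congrArg Subtype.val hzw)
  have hπK : Surjective πK := by
    rintro ⟨q0, hq0⟩
    have h1 : π (l q0) = 0 := by rw [hlap q0]; exact hq0
    obtain ⟨a, ha⟩ := (hex _).mp h1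
    obtain ⟨x, hx⟩ := heA a
    have hz : ((-x, q0) : ↑P × ↑Q) ∈ ker eB := by
      show eB (-x, q0) = 0
      rw [heBap (-x, q0)]
      show i (eA (-x)) + l q0 = 0
      rw [map_neg, map_neg, hx, ha]
      abel
    exact ⟨⟨(-x, q0), hz⟩, Subtype.ext rfl⟩
  have hexK : Function.Exact iK πK := by
    rintro ⟨⟨x, q0⟩, hz⟩
    constructor
    · intro h0
      have hq0 : q0 = 0 := congrArg Subtype.val h0
      have hx : eA x = 0 := by
        apply hi
        have : eB (x, q0) = 0 := hz
        rw [heBap (x, q0)] at this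
        rw [hq0, map_zero, add_zero] at this
        rw [this, map_zero]
      exact ⟨⟨x, hx⟩, Subtype.ext (Prod.ext rfl hq0.symm)⟩
    · rintro ⟨w, hw⟩
      rw [← hw]
      exact Subtype.ext rfl
  exact ⟨ModuleCat.of R (ker eA), ModuleCat.of R (ker eB), ModuleCat.of R (ker eG),
    iK, πK, hiK, hπK, hexK, res_one_ker eA hPproj heA, res_one_ker eB hPQproj heB,
    res_one_ker eG hQproj heG⟩

theorem horseshoe_tower {A B G : ModuleCat.{u} R} (i : A →ₗ[R] B) (π : B →ₗ[R] G)
    (hi : Injective i) (hπ : Surjective π) (hex : Function.Exact i π) :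
    ∀ j : ℕ, ∃ (Aj Bj Gj : ModuleCat.{u} R) (iK : Aj →ₗ[R] Bj) (πK : Bj →ₗ[R] Gj),
      Injective iK ∧ Surjective πK ∧ Function.Exact iK πK ∧
      ResWithKernel R (Proj R) j Aj A ∧ ResWithKernel R (Proj R) j Bj B ∧
      ResWithKernel R (Proj R) j Gj G := by
  intro j
  induction j with
  | zero =>
    exact ⟨A, B, G, i, π, hi, hπ, hex, ⟨LinearEquiv.refl R A⟩, ⟨LinearEquiv.refl R B⟩,
      ⟨LinearEquiv.refl R G⟩⟩
  | succ j ih =>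
    obtain ⟨Aj, Bj, Gj, iK, πK, hiK, hπK, hexK, hrA, hrB, hrG⟩ := ih
    obtain ⟨A', B', G', iK', πK', hiK', hπK', hexK', h1A, h1B, h1G⟩ :=
      horseshoe_step iK πK hiK hπK hexK
    have cA := res_compose h1A hrA
    have cB := res_compose h1B hrB
    have cG := res_compose h1G hrG
    rw [Nat.add_comm] at cA cB cG
    exact ⟨A', B', G', iK', πK', hiK', hπK', hexK', cA, cB, cG⟩

theorem lg_ext {A B G : ModuleCat.{u} R} (i : A →ₗ[R] B) (π : B →ₗ[R] G)
    (hi : Injective i) (hπ : Surjective π) (hex : Function.Exact i π)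
    (hA : LeftGood 𝒳 A) (hG : LeftGood 𝒳 G) : LeftGood 𝒳 B := by
  intro j K h
  obtain ⟨Aj, Bj, Gj, iK, πK, hiK, hπK, hexK, hrA, hrB, hrG⟩ :=
    horseshoe_tower i π hi hπ hex j
  have hevBj : Ext1Vanish 𝒳 Bj :=
    ev_ext iK πK hiK hπK hexK (hA j Aj hrA) (hG j Gj hrG)
  exact (ev_transfer hrB h).mp hevBj

theorem lg_ker {A B G : ModuleCat.{u} R} (i : A →ₗ[R] B) (π : B →ₗ[R] G)
    (hi : Injective i) (hπ : Surjective π) (hex : Function.Exact i π)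
    (hB : LeftGood 𝒳 B) (hG : LeftGood 𝒳 G) : LeftGood 𝒳 A := by
  intro j K h
  obtain ⟨Aj, Bj, Gj, iK, πK, hiK, hπK, hexK, hrA, hrB, hrG⟩ :=
    horseshoe_tower i π hi hπ hex j
  obtain ⟨Q, eGj, hQproj, heGj⟩ := exists_free_pres Gj
  have hevS : Ext1Vanish 𝒳 (ModuleCat.of R (ker eGj)) := by
    apply hG (j+1)
    have := res_compose (res_one_ker eGj hQproj heGj) hrG
    rw [Nat.add_comm] at this
    exact this
  have hevAj : Ext1Vanish 𝒳 Aj :=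
    ev_ker iK πK hiK hπK hexK (hB j Bj hrB) ((ker eGj).subtype) eGj hQproj
      Subtype.val_injective heGj (ker_exact eGj) hevS
  exact (ev_transfer hrA h).mp hevAj


/-! ### Extension closure of right chains -/

noncomputable def RChain.shift {G : ModuleCat.{u} R} (ch : RChain 𝒳 G) :
    RChain 𝒳 (ch.C 1) where
  C := fun n => ch.C (n+1)
  Q := fun n => ch.Q (n+1)
  ι := fun n => ch.ι (n+1)
  p := fun n => ch.p (n+1)
  proj := fun n => ch.proj (n+1)
  inj := fun n => ch.inj (n+1)
  surj := fun n => ch.surj (n+1)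
  exact := fun n => ch.exact (n+1)
  ev := fun n => ch.ev (n+1)
  e0 := LinearEquiv.refl R (ch.C 1)

structure ExtState (𝒳 : ModuleCat.{u} R → Prop) where
  A : ModuleCat.{u} R
  G : ModuleCat.{u} R
  B : ModuleCat.{u} R
  chA : RChain 𝒳 A
  chG : RChain 𝒳 G
  i : A →ₗ[R] B
  π : B →ₗ[R] G
  inj : Injective i
  surj : Surjective π
  exact : Function.Exact i π

theorem ExtState.evB (s : ExtState 𝒳) : Ext1Vanish 𝒳 s.B :=
  ev_ext s.i s.π s.inj s.surj s.exact (ev_congr s.chA.e0 (s.chA.ev 0))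
    (ev_congr s.chG.e0 (s.chG.ev 0))

noncomputable def ExtState.Qp (s : ExtState 𝒳) : ModuleCat.{u} R :=
  ModuleCat.of R (s.chA.Q 0 × s.chG.Q 0)

theorem ExtState.Qp_proj (s : ExtState 𝒳) : Module.Projective R s.Qp := by
  haveI := s.chA.proj 0; haveI := s.chG.proj 0
  exact inferInstanceAs (Module.Projective R (↑(s.chA.Q 0) × ↑(s.chG.Q 0)))

theorem ExtState.eE_ex (h𝒳 : ∀ P : ModuleCat.{u} R, Module.Projective R P → 𝒳 P) (s : ExtState 𝒳) :
    ∃ e : s.B →ₗ[R] s.chA.Q 0, e ∘ₗ s.i = s.chA.ι 0 ∘ₗ s.chA.e0.symm.toLinearMap :=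
  (ev_congr s.chG.e0 (s.chG.ev 0)) (s.chA.Q 0) (h𝒳 _ (s.chA.proj 0)) s.A s.B s.i s.π
    s.inj s.surj s.exact (s.chA.ι 0 ∘ₗ s.chA.e0.symm.toLinearMap)

noncomputable def ExtState.eE (h𝒳 : ∀ P : ModuleCat.{u} R, Module.Projective R P → 𝒳 P) (s : ExtState 𝒳) : s.B →ₗ[R] s.chA.Q 0 :=
  Classical.choose (s.eE_ex h𝒳)

theorem ExtState.eE_spec (h𝒳 : ∀ P : ModuleCat.{u} R, Module.Projective R P → 𝒳 P) (s : ExtState 𝒳) :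
    ∀ a, s.eE h𝒳 (s.i a) = s.chA.ι 0 (s.chA.e0.symm a) := fun a =>
  LinearMap.congr_fun (Classical.choose_spec (s.eE_ex h𝒳)) a

noncomputable def ExtState.em (h𝒳 : ∀ P : ModuleCat.{u} R, Module.Projective R P → 𝒳 P) (s : ExtState 𝒳) : s.B →ₗ[R] s.Qp :=
  (s.eE h𝒳).prod ((s.chG.ι 0) ∘ₗ s.chG.e0.symm.toLinearMap ∘ₗ s.π)

theorem ExtState.em_apply (h𝒳 : ∀ P : ModuleCat.{u} R, Module.Projective R P → 𝒳 P) (s : ExtState 𝒳) (b : s.B) :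
    s.em h𝒳 b = ((s.eE h𝒳 b : s.chA.Q 0), (s.chG.ι 0 (s.chG.e0.symm (s.π b)) : s.chG.Q 0)) :=
  rfl

theorem ExtState.em_i (h𝒳 : ∀ P : ModuleCat.{u} R, Module.Projective R P → 𝒳 P) (s : ExtState 𝒳) (a : s.A) :
    s.em h𝒳 (s.i a) = ((s.chA.ι 0 (s.chA.e0.symm a) : s.chA.Q 0), (0 : s.chG.Q 0)) := by
  rw [s.em_apply h𝒳]
  rw [s.eE_spec h𝒳 a]
  rw [s.exact.apply_apply_eq_zero a, map_zero, map_zero]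

theorem ExtState.em_inj (h𝒳 : ∀ P : ModuleCat.{u} R, Module.Projective R P → 𝒳 P) (s : ExtState 𝒳) : Injective (s.em h𝒳) := by
  rw [injective_iff_map_eq_zero]
  intro b hb
  have hsnd : s.chG.ι 0 (s.chG.e0.symm (s.π b)) = 0 := congrArg Prod.snd hb
  have hπb : s.π b = 0 := by
    have h1 : s.chG.e0.symm (s.π b) = 0 := by
      apply s.chG.inj 0
      rw [hsnd, map_zero]
    simpa using congrArg s.chG.e0 h1
  obtain ⟨a, ha⟩ := (s.exact b).mp hπb
  have hfst : s.eE h𝒳 b = 0 := congrArg Prod.fst hb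
  rw [← ha] at hfst
  rw [s.eE_spec h𝒳 a] at hfst
  have ha0 : a = 0 := by
    have h1 : s.chA.e0.symm a = 0 := by
      apply s.chA.inj 0
      rw [hfst, map_zero]
    simpa using congrArg s.chA.e0 h1
  rw [← ha, ha0, map_zero]

noncomputable def ExtState.newB (h𝒳 : ∀ P : ModuleCat.{u} R, Module.Projective R P → 𝒳 P) (s : ExtState 𝒳) : ModuleCat.{u} R :=
  ModuleCat.of R (s.Qp ⧸ range (s.em h𝒳))

noncomputable def ExtState.pq (h𝒳 : ∀ P : ModuleCat.{u} R, Module.Projective R P → 𝒳 P) (s : ExtState 𝒳) : s.Qp →ₗ[R] s.newB h𝒳 :=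
  (range (s.em h𝒳)).mkQ

theorem ExtState.pq_surj (h𝒳 : ∀ P : ModuleCat.{u} R, Module.Projective R P → 𝒳 P) (s : ExtState 𝒳) : Surjective (s.pq h𝒳) :=
  Submodule.mkQ_surjective _

theorem ExtState.pq_zero_iff (h𝒳 : ∀ P : ModuleCat.{u} R, Module.Projective R P → 𝒳 P) (s : ExtState 𝒳) (z : s.Qp) :
    s.pq h𝒳 z = 0 ↔ z ∈ range (s.em h𝒳) := Submodule.Quotient.mk_eq_zero _

theorem ExtState.em_pq_exact (h𝒳 : ∀ P : ModuleCat.{u} R, Module.Projective R P → 𝒳 P) (s : ExtState 𝒳) : Function.Exact (s.em h𝒳) (s.pq h𝒳) := by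
  intro z
  rw [s.pq_zero_iff h𝒳 z]
  exact ⟨fun h => h, fun h => h⟩

-- the map m1 : Q_A 0 → newB
noncomputable def ExtState.m1 (h𝒳 : ∀ P : ModuleCat.{u} R, Module.Projective R P → 𝒳 P) (s : ExtState 𝒳) : s.chA.Q 0 →ₗ[R] s.newB h𝒳 :=
  (s.pq h𝒳) ∘ₗ LinearMap.inl R (s.chA.Q 0) (s.chG.Q 0)

theorem ExtState.m1_ker (h𝒳 : ∀ P : ModuleCat.{u} R, Module.Projective R P → 𝒳 P) (s : ExtState 𝒳) : ker (s.chA.p 0) ≤ ker (s.m1 h𝒳) := by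
  intro x hx
  obtain ⟨c, hc⟩ := ((s.chA.exact 0) x).mp hx
  show s.pq h𝒳 ((LinearMap.inl R (s.chA.Q 0) (s.chG.Q 0)) x) = 0
  refine (s.pq_zero_iff h𝒳 _).mpr ?_
  refine ⟨s.i (s.chA.e0 c), ?_⟩
  rw [s.em_i h𝒳 (s.chA.e0 c)]
  show ((s.chA.ι 0 (s.chA.e0.symm (s.chA.e0 c)) : _), (0 : _)) = (x, 0)
  rw [LinearEquiv.symm_apply_apply, hc]

noncomputable def ExtState.i' (h𝒳 : ∀ P : ModuleCat.{u} R, Module.Projective R P → 𝒳 P) (s : ExtState 𝒳) : s.chA.C 1 →ₗ[R] s.newB h𝒳 :=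
  Classical.choose (lift_of_surjective (s.chA.p 0) (s.chA.surj 0) (s.m1 h𝒳) (s.m1_ker h𝒳))

theorem ExtState.i'_spec (h𝒳 : ∀ P : ModuleCat.{u} R, Module.Projective R P → 𝒳 P) (s : ExtState 𝒳) :
    ∀ x, s.i' h𝒳 (s.chA.p 0 x) = s.m1 h𝒳 x := fun x =>
  LinearMap.congr_fun (Classical.choose_spec
    (lift_of_surjective (s.chA.p 0) (s.chA.surj 0) (s.m1 h𝒳) (s.m1_ker h𝒳))) x

-- the map m2 : Qp → C_G 1
noncomputable def ExtState.m2 (h𝒳 : ∀ P : ModuleCat.{u} R, Module.Projective R P → 𝒳 P) (s : ExtState 𝒳) : s.Qp →ₗ[R] s.chG.C 1 :=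
  (s.chG.p 0) ∘ₗ LinearMap.snd R (s.chA.Q 0) (s.chG.Q 0)

theorem ExtState.m2_ker (h𝒳 : ∀ P : ModuleCat.{u} R, Module.Projective R P → 𝒳 P) (s : ExtState 𝒳) : ker (s.pq h𝒳) ≤ ker (s.m2 h𝒳) := by
  intro z hz
  have hz' : z ∈ range (s.em h𝒳) := by
    rw [← s.pq_zero_iff h𝒳]
    exact hz
  obtain ⟨b, hb⟩ := hz'
  show s.m2 h𝒳 z = 0
  rw [← hb]
  show s.chG.p 0 (s.chG.ι 0 (s.chG.e0.symm (s.π b))) = 0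
  exact (s.chG.exact 0).apply_apply_eq_zero _

noncomputable def ExtState.π' (h𝒳 : ∀ P : ModuleCat.{u} R, Module.Projective R P → 𝒳 P) (s : ExtState 𝒳) : s.newB h𝒳 →ₗ[R] s.chG.C 1 :=
  Classical.choose (lift_of_surjective (s.pq h𝒳) (s.pq_surj h𝒳) (s.m2 h𝒳) (s.m2_ker h𝒳))

theorem ExtState.π'_spec (h𝒳 : ∀ P : ModuleCat.{u} R, Module.Projective R P → 𝒳 P) (s : ExtState 𝒳) :
    ∀ z, s.π' h𝒳 (s.pq h𝒳 z) = s.m2 h𝒳 z := fun z =>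
  LinearMap.congr_fun (Classical.choose_spec
    (lift_of_surjective (s.pq h𝒳) (s.pq_surj h𝒳) (s.m2 h𝒳) (s.m2_ker h𝒳))) z

theorem ExtState.i'_inj (h𝒳 : ∀ P : ModuleCat.{u} R, Module.Projective R P → 𝒳 P) (s : ExtState 𝒳) : Injective (s.i' h𝒳) := by
  rw [injective_iff_map_eq_zero]
  intro c hc
  obtain ⟨x, hx⟩ := s.chA.surj 0 c
  rw [← hx] at hc
  rw [s.i'_spec h𝒳 x] at hc
  have hmem : (LinearMap.inl R (s.chA.Q 0) (s.chG.Q 0)) x ∈ range (s.em h𝒳) := by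
    exact (s.pq_zero_iff h𝒳 _).mp hc
  obtain ⟨b, hb⟩ := hmem
  have hsnd : s.chG.ι 0 (s.chG.e0.symm (s.π b)) = 0 := congrArg Prod.snd hb
  have hπb : s.π b = 0 := by
    have h1 : s.chG.e0.symm (s.π b) = 0 := by
      apply s.chG.inj 0
      rw [hsnd, map_zero]
    simpa using congrArg s.chG.e0 h1
  obtain ⟨a, ha⟩ := (s.exact b).mp hπb
  have hfst : s.eE h𝒳 b = x := congrArg Prod.fst hb
  rw [← ha, s.eE_spec h𝒳 a] at hfst
  rw [← hx, ← hfst]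
  exact (s.chA.exact 0).apply_apply_eq_zero _

theorem ExtState.π'_surj (h𝒳 : ∀ P : ModuleCat.{u} R, Module.Projective R P → 𝒳 P) (s : ExtState 𝒳) : Surjective (s.π' h𝒳) := by
  intro c
  obtain ⟨y, hy⟩ := s.chG.surj 0 c
  refine ⟨s.pq h𝒳 ((0 : s.chA.Q 0), y), ?_⟩
  refine (s.π'_spec h𝒳 _).trans ?_
  show s.chG.p 0 y = c
  exact hy

theorem ExtState.exact' (h𝒳 : ∀ P : ModuleCat.{u} R, Module.Projective R P → 𝒳 P) (s : ExtState 𝒳) : Function.Exact (s.i' h𝒳) (s.π' h𝒳) := by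
  intro z
  constructor
  · intro hz
    obtain ⟨⟨x, y⟩, hxy⟩ := s.pq_surj h𝒳 z
    rw [← hxy] at hz
    replace hz := (s.π'_spec h𝒳 _).symm.trans hz
    have hy0 : s.chG.p 0 y = 0 := hz
    obtain ⟨c₀, hc₀⟩ := ((s.chG.exact 0) y).mp hy0
    obtain ⟨b, hbπ⟩ := s.surj (s.chG.e0 c₀)
    have hemb : s.em h𝒳 b = ((s.eE h𝒳 b : _), y) := by
      rw [s.em_apply h𝒳]
      show _ = (_, y)
      rw [hbπ, LinearEquiv.symm_apply_apply, hc₀]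
    refine ⟨s.chA.p 0 (x - s.eE h𝒳 b), ?_⟩
    rw [s.i'_spec h𝒳]
    show s.pq h𝒳 ((LinearMap.inl R (s.chA.Q 0) (s.chG.Q 0)) (x - s.eE h𝒳 b)) = z
    have hkey : (LinearMap.inl R (s.chA.Q 0) (s.chG.Q 0)) (x - s.eE h𝒳 b)
        = (show ↑s.Qp from (x, y)) - s.em h𝒳 b := by
      rw [hemb]
      show ((x - s.eE h𝒳 b : _), (0 : ↑(s.chG.Q 0))) = ((x - s.eE h𝒳 b : _), y - y)
      rw [sub_self]
    rw [hkey, map_sub]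
    have hz0 : s.pq h𝒳 (s.em h𝒳 b) = 0 := by
      rw [s.pq_zero_iff h𝒳]
      exact ⟨b, rfl⟩
    rw [hz0, sub_zero]
    exact hxy
  · rintro ⟨c, hc⟩
    rw [← hc]
    obtain ⟨x, hx⟩ := s.chA.surj 0 c
    rw [← hx, s.i'_spec h𝒳]
    show s.π' h𝒳 (s.pq h𝒳 ((LinearMap.inl R (s.chA.Q 0) (s.chG.Q 0)) x)) = 0
    refine (s.π'_spec h𝒳 _).trans ?_
    show s.chG.p 0 (0 : ↑(s.chG.Q 0)) = 0
    rw [map_zero]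

noncomputable def ExtState.step (h𝒳 : ∀ P : ModuleCat.{u} R, Module.Projective R P → 𝒳 P) (s : ExtState 𝒳) : ExtState 𝒳 where
  A := s.chA.C 1
  G := s.chG.C 1
  B := s.newB h𝒳
  chA := s.chA.shift
  chG := s.chG.shift
  i := s.i' h𝒳
  π := s.π' h𝒳
  inj := s.i'_inj h𝒳
  surj := s.π'_surj h𝒳
  exact := s.exact' h𝒳

noncomputable def extStates (h𝒳 : ∀ P : ModuleCat.{u} R, Module.Projective R P → 𝒳 P)
    (s0 : ExtState 𝒳) : ℕ → ExtState 𝒳 :=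
  fun n => Nat.rec s0 (fun _ s => s.step h𝒳) n

noncomputable def buildChain (h𝒳 : ∀ P : ModuleCat.{u} R, Module.Projective R P → 𝒳 P) (s0 : ExtState 𝒳) : RChain 𝒳 s0.B where
  C := fun n => (extStates h𝒳 s0 n).B
  Q := fun n => (extStates h𝒳 s0 n).Qp
  ι := fun n => (extStates h𝒳 s0 n).em h𝒳
  p := fun n => (extStates h𝒳 s0 n).pq h𝒳
  proj := fun n => (extStates h𝒳 s0 n).Qp_proj
  inj := fun n => (extStates h𝒳 s0 n).em_inj h𝒳
  surj := fun n => (extStates h𝒳 s0 n).pq_surj h𝒳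
  exact := fun n => (extStates h𝒳 s0 n).em_pq_exact h𝒳
  ev := fun n => (extStates h𝒳 s0 n).evB
  e0 := LinearEquiv.refl R s0.B

theorem gp_ext (h𝒳 : ∀ P : ModuleCat.{u} R, Module.Projective R P → 𝒳 P) {A B G : ModuleCat.{u} R} (i : A →ₗ[R] B) (π : B →ₗ[R] G)
    (hi : Injective i) (hπ : Surjective π) (hex : Function.Exact i π)
    (hA : IsGP 𝒳 A) (hG : IsGP 𝒳 G) : IsGP 𝒳 B := by
  obtain ⟨lgA, ⟨chA⟩⟩ := hA
  obtain ⟨lgG, ⟨chG⟩⟩ := hG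
  exact ⟨lg_ext i π hi hπ hex lgA lgG,
    ⟨buildChain h𝒳 ⟨A, G, B, chA, chG, i, π, hi, hπ, hex⟩⟩⟩


theorem gp_of_chain_shift {G : ModuleCat.{u} R} (hlg : LeftGood 𝒳 G) (ch : RChain 𝒳 G) :
    IsGP 𝒳 (ch.C 1) :=
  ⟨lg_cokernel (ch.ι 0) (ch.p 0) (ch.proj 0) (ch.inj 0) (ch.surj 0) (ch.exact 0)
    (lg_congr ch.e0.symm hlg) (ch.ev 1), ⟨ch.shift⟩⟩

theorem gp_ker (h𝒳 : ∀ P : ModuleCat.{u} R, Module.Projective R P → 𝒳 P)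
    {A B G : ModuleCat.{u} R} (i : A →ₗ[R] B) (π : B →ₗ[R] G)
    (hi : Injective i) (hπ : Surjective π) (hex : Function.Exact i π)
    (hB : IsGP 𝒳 B) (hG : IsGP 𝒳 G) : IsGP 𝒳 A := by
  obtain ⟨lgB, ⟨chB⟩⟩ := hB
  obtain ⟨lgG, ⟨chG⟩⟩ := hG
  have lgA : LeftGood 𝒳 A := lg_ker i π hi hπ hex lgB lgG
  refine ⟨lgA, ?_⟩
  let Q := chB.Q 0
  let embB : B →ₗ[R] Q := chB.ι 0 ∘ₗ chB.e0.symm.toLinearMap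
  have hembB_inj : Injective embB := by
    intro x y h
    have h1 : chB.e0.symm x = chB.e0.symm y := chB.inj 0 h
    simpa using congrArg chB.e0 h1
  let j : A →ₗ[R] Q := embB ∘ₗ i
  have hj_inj : Injective j := by
    intro x y h
    exact hi (hembB_inj h)
  let CA1 := ModuleCat.of R ((↑Q : Type u) ⧸ range j)
  let mkA : Q →ₗ[R] CA1 := (range j).mkQ
  have hmkA_surj : Surjective mkA := Submodule.mkQ_surjective _
  -- the inclusion G → CA1
  have hm_ker : ker π ≤ ker (mkA ∘ₗ embB) := by
    intro b hb
    obtain ⟨a, ha⟩ := (hex b).mp hb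
    show mkA (embB b) = 0
    rw [← ha]
    exact (Submodule.Quotient.mk_eq_zero _).mpr ⟨a, rfl⟩
  obtain ⟨ιm, hιm⟩ := lift_of_surjective π hπ (mkA ∘ₗ embB) hm_ker
  have hιm_ap : ∀ b, ιm (π b) = mkA (embB b) := fun b => LinearMap.congr_fun hιm b
  have hιm_inj : Injective ιm := by
    rw [injective_iff_map_eq_zero]
    intro g hg
    obtain ⟨b, hb⟩ := hπ g
    rw [← hb, hιm_ap b] at hg
    have hmem : embB b ∈ range j := (Submodule.Quotient.mk_eq_zero _).mp hg
    obtain ⟨a, ha⟩ := hmem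
    have hba : i a = b := hembB_inj (show embB (i a) = embB b from ha)
    rw [← hb, ← hba]
    exact hex.apply_apply_eq_zero a
  -- the projection CA1 → CB1
  let CB1 := ModuleCat.of R ((↑Q : Type u) ⧸ range embB)
  let mkB : Q →ₗ[R] CB1 := (range embB).mkQ
  have hpm_ker : ker mkA ≤ ker mkB := by
    intro z hz
    rw [Submodule.ker_mkQ] at hz
    obtain ⟨a, ha⟩ := hz
    show mkB z = 0
    rw [← ha]
    exact (Submodule.Quotient.mk_eq_zero _).mpr ⟨i a, rfl⟩
  obtain ⟨pm, hpm⟩ := lift_of_surjective mkA hmkA_surj mkB hpm_ker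
  have hpm_ap : ∀ z, pm (mkA z) = mkB z := fun z => LinearMap.congr_fun hpm z
  have hpm_surj : Surjective pm := by
    intro w
    obtain ⟨q, hq⟩ := Submodule.mkQ_surjective (range embB) w
    exact ⟨mkA q, by rw [hpm_ap q]; exact hq⟩
  have hexact_m : Function.Exact ιm pm := by
    intro z
    constructor
    · intro hz
      obtain ⟨q, hq⟩ := hmkA_surj z
      rw [← hq, hpm_ap q] at hz
      obtain ⟨b, hb⟩ := (Submodule.Quotient.mk_eq_zero _).mp hz
      refine ⟨π b, ?_⟩
      rw [hιm_ap b]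
      rw [show embB b = q from hb]
      exact hq
    · rintro ⟨g, hg⟩
      rw [← hg]
      obtain ⟨b, hb⟩ := hπ g
      rw [← hb, hιm_ap b, hpm_ap (embB b)]
      exact (Submodule.Quotient.mk_eq_zero _).mpr ⟨b, rfl⟩
  -- CB1 is iso to chB.C 1
  have hker_eq : range embB = ker (chB.p 0) := by
    ext q
    constructor
    · rintro ⟨b, rfl⟩
      show chB.p 0 (chB.ι 0 (chB.e0.symm b)) = 0
      exact (chB.exact 0).apply_apply_eq_zero _
    · intro hq
      obtain ⟨c, hc⟩ := ((chB.exact 0) q).mp hq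
      exact ⟨chB.e0 c, by show chB.ι 0 (chB.e0.symm (chB.e0 c)) = q; rw [LinearEquiv.symm_apply_apply]; exact hc⟩
  let eCB : CB1 ≃ₗ[R] chB.C 1 :=
    (Submodule.quotEquivOfEq _ _ hker_eq).trans
      ((chB.p 0).quotKerEquivOfSurjective (chB.surj 0))
  have hGPCA1 : IsGP 𝒳 CA1 :=
    gp_ext h𝒳 ιm pm hιm_inj hpm_surj hexact_m ⟨lgG, ⟨chG⟩⟩
      (gp_congr eCB.symm (gp_of_chain_shift lgB chB))
  obtain ⟨_, ⟨chC⟩⟩ := hGPCA1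
  have hp0_exact : Function.Exact j (chC.e0.symm.toLinearMap ∘ₗ mkA) := by
    intro z
    constructor
    · intro hz
      have h1 : mkA z = 0 := by
        have : chC.e0.symm (mkA z) = 0 := hz
        simpa using congrArg chC.e0 this
      exact (Submodule.Quotient.mk_eq_zero _).mp h1
    · rintro ⟨a, ha⟩
      show chC.e0.symm (mkA z) = 0
      have h1 : mkA z = 0 := by
        rw [← ha]
        exact (Submodule.Quotient.mk_eq_zero _).mpr ⟨a, rfl⟩
      rw [h1, map_zero]
  refine ⟨{
    C := fun n => match n with | 0 => A | n+1 => chC.C n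
    Q := fun n => match n with | 0 => Q | n+1 => chC.Q n
    ι := fun n => match n with | 0 => j | n+1 => chC.ι n
    p := fun n => match n with | 0 => chC.e0.symm.toLinearMap ∘ₗ mkA | n+1 => chC.p n
    proj := fun n => match n with | 0 => chB.proj 0 | n+1 => chC.proj n
    inj := fun n => match n with | 0 => hj_inj | n+1 => chC.inj n
    surj := fun n => match n with
      | 0 => chC.e0.symm.surjective.comp hmkA_surj
      | n+1 => chC.surj n
    exact := fun n => match n with | 0 => hp0_exact | n+1 => chC.exact n
    ev := fun n => match n with | 0 => lg_ev lgA | n+1 => chC.ev n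
    e0 := LinearEquiv.refl R A }⟩

theorem gp_resolving (h𝒳 : ∀ P : ModuleCat.{u} R, Module.Projective R P → 𝒳 P)
    {A B G : ModuleCat.{u} R} (i : A →ₗ[R] B) (π : B →ₗ[R] G)
    (hi : Injective i) (hπ : Surjective π) (hex : Function.Exact i π)
    (hG : IsGP 𝒳 G) : (IsGP 𝒳 A ↔ IsGP 𝒳 B) :=
  ⟨fun hA => gp_ext h𝒳 i π hi hπ hex hA hG, fun hB => gp_ker h𝒳 i π hi hπ hex hB hG⟩

theorem gp_sum_proj (h𝒳 : ∀ P : ModuleCat.{u} R, Module.Projective R P → 𝒳 P)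
    (A P : ModuleCat.{u} R) (hP : Module.Projective R P) :
    (IsGP 𝒳 A ↔ IsGP 𝒳 (ModuleCat.of R (A × P))) := by
  have hex : Function.Exact ((LinearMap.inl R A P : A →ₗ[R] ModuleCat.of R (A × P)))
      (LinearMap.snd R A P) := by
    rintro ⟨a, p⟩
    constructor
    · intro hp
      replace hp : p = 0 := hp
      exact ⟨a, by show ((a : ↑A), (0 : ↑P)) = (a, p); rw [hp]⟩
    · rintro ⟨x, hx⟩
      replace hx : ((x : ↑A), (0 : ↑P)) = (a, p) := hx
      exact (congrArg Prod.snd hx).symm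
  exact gp_resolving h𝒳 (LinearMap.inl R A P) (LinearMap.snd R A P)
    (fun x y h => congrArg Prod.fst h) (fun p => ⟨(0, p), rfl⟩) hex
    (gp_of_projective hP)


/-! ### comparison of resolutions -/

theorem gp_syz (h𝒳 : ∀ P : ModuleCat.{u} R, Module.Projective R P → 𝒳 P) :
    ∀ {j : ℕ} {Z A₀ : ModuleCat.{u} R}, ResWithKernel R (Proj R) j Z A₀ → IsGP 𝒳 A₀ →
    IsGP 𝒳 Z := by
  intro j
  induction j with
  | zero =>
    intro Z A₀ h hA
    obtain ⟨e⟩ := h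
    exact gp_congr e.symm hA
  | succ j ih =>
    intro Z A₀ h hA
    obtain ⟨P, L, f, g, hP, hf, hg, hexf, hres⟩ := h
    have hL : IsGP 𝒳 L := (gp_resolving h𝒳 f g hf hg hexf hA).mpr (gp_of_projective hP)
    exact ih hres hL

theorem gp_transfer (h𝒳 : ∀ P : ModuleCat.{u} R, Module.Projective R P → 𝒳 P)
    {n : ℕ} {M K K' : ModuleCat.{u} R} (h : ResWithKernel R (Proj R) n K M)
    (h' : ResWithKernel R (Proj R) n K' M) : IsGP 𝒳 K ↔ IsGP 𝒳 K' :=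
  transfer (IsGP 𝒳) (fun e hA => gp_congr e hA) (fun A P hP => gp_sum_proj h𝒳 A P hP) h h'

theorem gp_ftrans (h𝒳 : ∀ P : ModuleCat.{u} R, Module.Projective R P → 𝒳 P)
    {j : ℕ} {Ω N A₀ : ModuleCat.{u} R} (ιΩ : Ω →ₗ[R] N) (pA : N →ₗ[R] A₀)
    (hι : Injective ιΩ) (hp : Surjective pA) (hexx : Function.Exact ιΩ pA)
    (hA₀ : IsGP 𝒳 A₀) {KΩ KN : ModuleCat.{u} R}
    (hKΩ : ResWithKernel R (Proj R) j KΩ Ω) (hKN : ResWithKernel R (Proj R) j KN N) :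
    (IsGP 𝒳 KΩ ↔ IsGP 𝒳 KN) := by
  obtain ⟨Xj, Yj, Zj, iK, πK, hiK, hπK, hexK, hrX, hrY, hrZ⟩ :=
    horseshoe_tower ιΩ pA hι hp hexx j
  have hZ : IsGP 𝒳 Zj := gp_syz h𝒳 hrZ hA₀
  have hXY : IsGP 𝒳 Xj ↔ IsGP 𝒳 Yj := gp_resolving h𝒳 iK πK hiK hπK hexK hZ
  exact ((gp_transfer h𝒳 hKΩ hrX).trans hXY).trans (gp_transfer h𝒳 hrY hKN)

theorem gp_T (h𝒳 : ∀ P : ModuleCat.{u} R, Module.Projective R P → 𝒳 P) :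
    ∀ {n : ℕ} {M K K' : ModuleCat.{u} R}, ResWithKernel R (IsGP 𝒳) n K M →
    ResWithKernel R (Proj R) n K' M → (IsGP 𝒳 K ↔ IsGP 𝒳 K') := by
  intro n
  induction n with
  | zero =>
    intro M K K' h h'
    obtain ⟨e⟩ := h
    obtain ⟨e'⟩ := h'
    exact ⟨fun hK => gp_congr (e.trans e'.symm) hK, fun hK => gp_congr (e'.trans e.symm) hK⟩
  | succ n ih =>
    intro M K K' h h'
    obtain ⟨A₀, L, f, g, hA₀, hf, hg, hexf, hres⟩ := h
    obtain ⟨P₀, Ω, f', g', hP₀, hf', hg', hexf', hres'⟩ := h'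
    -- pullback of g : A₀ → M and g' : P₀ → M
    obtain ⟨eH⟩ := split_iso (pbJ1 g g' f hexf) (pbPr2 g g')
      (pbJ1_inj g g' f hexf hf) (pbPr2_surj g g' hg) (pb_exact1 g g' f hexf) hP₀
    have hsesΩ1 : Injective (pbJ2 g g' f' hexf') := pbJ2_inj g g' f' hexf' hf'
    have hsesΩ2 : Surjective (pbPr1 g g') := pbPr1_surj g g' hg'
    have hsesΩ3 : Function.Exact (pbJ2 g g' f' hexf') (pbPr1 g g') := pb_exact2 g g' f' hexf'
    cases n with
    | zero =>
      obtain ⟨eK⟩ := hres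
      obtain ⟨eK'⟩ := hres'
      -- K ≅ L, K' ≅ Ω ; IsGP L ↔ IsGP (L×P₀) ↔ IsGP H ↔ IsGP Ω
      have h1 : IsGP 𝒳 L ↔ IsGP 𝒳 (ModuleCat.of R (L × P₀)) := gp_sum_proj h𝒳 L P₀ hP₀
      have h2 : IsGP 𝒳 (ModuleCat.of R (L × P₀)) ↔ IsGP 𝒳 (pbMod g g') :=
        ⟨fun hx => gp_congr eH.symm hx, fun hx => gp_congr eH hx⟩
      have h3 : IsGP 𝒳 Ω ↔ IsGP 𝒳 (pbMod g g') :=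
        gp_resolving h𝒳 (pbJ2 g g' f' hexf') (pbPr1 g g') hsesΩ1 hsesΩ2 hsesΩ3 hA₀
      constructor
      · intro hK
        apply gp_congr eK'.symm
        apply h3.mpr
        apply h2.mp
        apply h1.mp
        exact gp_congr eK hK
      · intro hK'
        apply gp_congr eK.symm
        apply h1.mpr
        apply h2.mpr
        apply h3.mp
        exact gp_congr eK' hK'
    | succ m =>
      have hcl : ∀ A : ModuleCat.{u} R, IsGP 𝒳 A → IsGP 𝒳 (ModuleCat.of R (A × P₀)) :=
        fun A hA => (gp_sum_proj h𝒳 A P₀ hP₀).mp hA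
      have hKH : ResWithKernel R (IsGP 𝒳) (m+1) K (pbMod g g') :=
        res_congr eH.symm (res_pad P₀ hcl hres)
      obtain ⟨KH, hKHproj⟩ := exists_res (pbMod g g') (m+1)
      have h1 : IsGP 𝒳 K ↔ IsGP 𝒳 KH := ih hKH hKHproj
      have h2 : IsGP 𝒳 K' ↔ IsGP 𝒳 KH :=
        gp_ftrans h𝒳 (pbJ2 g g' f' hexf') (pbPr1 g g') hsesΩ1 hsesΩ2 hsesΩ3 hA₀ hres' hKHproj
      exact h1.trans h2.symm

theorem gp_S (h𝒳 : ∀ P : ModuleCat.{u} R, Module.Projective R P → 𝒳 P)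
    {n : ℕ} {M K K' : ModuleCat.{u} R} (h : ResWithKernel R (IsGP 𝒳) n K M)
    (h' : ResWithKernel R (IsGP 𝒳) n K' M) : IsGP 𝒳 K ↔ IsGP 𝒳 K' := by
  obtain ⟨Kp, hKp⟩ := exists_res M n
  exact (gp_T h𝒳 h hKp).trans (gp_T h𝒳 h' hKp).symm


/-! ### from IsGP to complete resolutions -/

noncomputable def fE (N : ModuleCat.{u} R) : (ModuleCat.of R (↑N →₀ R)) →ₗ[R] N :=
  Finsupp.linearCombination R _root_.id

theorem fE_surj (N : ModuleCat.{u} R) : Surjective (fE N) :=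
  Finsupp.linearCombination_id_surjective R N

theorem fE_proj (N : ModuleCat.{u} R) : Module.Projective R (ModuleCat.of R (↑N →₀ R)) :=
  inferInstanceAs (Module.Projective R (↑N →₀ R))

noncomputable def syzMod (M : ModuleCat.{u} R) : ℕ → ModuleCat.{u} R
  | 0 => M
  | j+1 => ModuleCat.of R (ker (fE (syzMod M j)))

noncomputable def freeM (M : ModuleCat.{u} R) (j : ℕ) : ModuleCat.{u} R :=
  ModuleCat.of R (↑(syzMod M j) →₀ R)

noncomputable def eps (M : ModuleCat.{u} R) (j : ℕ) : freeM M j →ₗ[R] syzMod M j :=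
  fE (syzMod M j)

theorem res_syz (M : ModuleCat.{u} R) : ∀ j : ℕ, ResWithKernel R (Proj R) j (syzMod M j) M := by
  intro j
  induction j with
  | zero => exact ⟨LinearEquiv.refl R M⟩
  | succ j ih =>
    have h1 : ResWithKernel R (Proj R) 1 (syzMod M (j+1)) (syzMod M j) :=
      res_one_ker (fE (syzMod M j)) (fE_proj _) (fE_surj _)
    have := res_compose h1 ih
    rw [Nat.add_comm] at this
    exact this

theorem hom_factor {U V W T Y : ModuleCat.{u} R} (hY : 𝒳 Y)
    (d₁ : U →ₗ[R] V) (d₂ : V →ₗ[R] W) (hex12 : Function.Exact d₁ d₂)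
    (σ : W →ₗ[R] T) (hσ : Surjective σ) (hexσ : Function.Exact d₂ σ)
    (hev : Ext1Vanish 𝒳 T)
    (f : V →ₗ[R] Y) (hf : f ∘ₗ d₁ = 0) : ∃ g : W →ₗ[R] Y, g ∘ₗ d₂ = f := by
  set N : Submodule R W := range d₂ with hN
  let d₂' : V →ₗ[R] ModuleCat.of R N := d₂.codRestrict N (fun v => ⟨v, rfl⟩)
  have hd₂'surj : Surjective d₂' := by
    rintro ⟨w, ⟨v, hv⟩⟩
    exact ⟨v, Subtype.ext hv⟩
  have hkerf : ker d₂' ≤ ker f := by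
    intro v hv
    have h0 : d₂ v = 0 := congrArg Subtype.val (show d₂' v = 0 from hv)
    obtain ⟨u0, hu0⟩ := (hex12 v).mp h0
    show f v = 0
    rw [← hu0]
    exact LinearMap.congr_fun hf u0
  obtain ⟨h, hh⟩ := lift_of_surjective d₂' hd₂'surj f hkerf
  have hhap : ∀ v, h (d₂' v) = f v := fun v => LinearMap.congr_fun hh v
  have hexNσ : Function.Exact (N.subtype : N →ₗ[R] W) σ := by
    intro w
    constructor
    · intro h0
      obtain ⟨v, hv⟩ := (hexσ w).mp h0
      exact ⟨⟨w, ⟨v, hv⟩⟩, rfl⟩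
    · rintro ⟨⟨z, hz⟩, rfl⟩
      exact (hexσ z).mpr hz
  obtain ⟨g, hg⟩ := hev Y hY (ModuleCat.of R N) W N.subtype σ Subtype.val_injective hσ hexNσ h
  have hgap : ∀ z : N, g (N.subtype z) = h z := fun z => LinearMap.congr_fun hg z
  refine ⟨g, ?_⟩
  ext v
  show g (d₂ v) = f v
  have : g (N.subtype (d₂' v)) = h (d₂' v) := hgap (d₂' v)
  rw [show (N.subtype (d₂' v) : ↑W) = d₂ v from rfl] at this
  rw [this, hhap v]

variable {G : ModuleCat.{u} R}

noncomputable def gluP (ch : RChain 𝒳 G) : ℤ → ModuleCat.{u} R := fun n =>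
  match n with
  | .ofNat k => ch.Q k
  | .negSucc k => freeM G k

noncomputable def gluD (ch : RChain 𝒳 G) : ∀ n : ℤ, gluP ch n →ₗ[R] gluP ch (n + 1) :=
  fun n =>
  match n with
  | .ofNat k => (ch.ι (k+1)) ∘ₗ ch.p k
  | .negSucc 0 => (ch.ι 0) ∘ₗ ch.e0.symm.toLinearMap ∘ₗ (eps G 0)
  | .negSucc (k+1) => (ker (fE (syzMod G k))).subtype ∘ₗ (eps G (k+1))

theorem gluProj (ch : RChain 𝒳 G) : ∀ n : ℤ, Module.Projective R (gluP ch n) := fun n =>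
  match n with
  | .ofNat k => ch.proj k
  | .negSucc k => fE_proj _

theorem gluExact (ch : RChain 𝒳 G) : ∀ n : ℤ, Function.Exact (gluD ch n) (gluD ch (n+1)) :=
  fun n =>
  match n with
  | .ofNat k => by
    show Function.Exact ((ch.ι (k+1)) ∘ₗ ch.p k) ((ch.ι (k+2)) ∘ₗ ch.p (k+1))
    intro z
    constructor
    · intro h0
      have hp : ch.p (k+1) z = 0 := by
        apply ch.inj (k+2)
        rw [show ch.ι (k+2) (ch.p (k+1) z) = 0 from h0, map_zero]
      obtain ⟨c, hc⟩ := ((ch.exact (k+1)) z).mp hp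
      obtain ⟨q, hq⟩ := ch.surj k c
      exact ⟨q, by show ch.ι (k+1) (ch.p k q) = z; rw [hq, hc]⟩
    · rintro ⟨q, hq⟩
      rw [← hq]
      show ch.ι (k+2) (ch.p (k+1) (ch.ι (k+1) (ch.p k q))) = 0
      rw [(ch.exact (k+1)).apply_apply_eq_zero (ch.p k q), map_zero]
  | .negSucc 0 => by
    show Function.Exact ((ch.ι 0) ∘ₗ ch.e0.symm.toLinearMap ∘ₗ (eps G 0))
      ((ch.ι 1) ∘ₗ ch.p 0)
    intro z
    constructor
    · intro h0
      have hp : ch.p 0 z = 0 := by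
        apply ch.inj 1
        rw [show ch.ι 1 (ch.p 0 z) = 0 from h0, map_zero]
      obtain ⟨c, hc⟩ := ((ch.exact 0) z).mp hp
      obtain ⟨x, hx⟩ := fE_surj G (ch.e0 c)
      refine ⟨x, ?_⟩
      show ch.ι 0 (ch.e0.symm (eps G 0 x)) = z
      rw [show (eps G 0 x : ↑G) = ch.e0 c from hx, LinearEquiv.symm_apply_apply, hc]
    · rintro ⟨x, hx⟩
      rw [← hx]
      show ch.ι 1 (ch.p 0 (ch.ι 0 (ch.e0.symm (eps G 0 x)))) = 0
      rw [(ch.exact 0).apply_apply_eq_zero, map_zero]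
  | .negSucc 1 => by
    show Function.Exact ((ker (fE (syzMod G 0))).subtype ∘ₗ (eps G 1))
      ((ch.ι 0) ∘ₗ ch.e0.symm.toLinearMap ∘ₗ (eps G 0))
    intro z
    constructor
    · intro h0
      have he : eps G 0 z = 0 := by
        have h1 : ch.e0.symm (eps G 0 z) = 0 := by
          apply ch.inj 0
          rw [show ch.ι 0 (ch.e0.symm (eps G 0 z)) = 0 from h0, map_zero]
        exact ch.e0.symm.injective (h1.trans (map_zero _).symm)
      obtain ⟨w, hw⟩ := fE_surj (syzMod G 1) (show ↑(syzMod G 1) from ⟨z, he⟩)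
      refine ⟨w, ?_⟩
      show (ker (fE (syzMod G 0))).subtype (eps G 1 w) = z
      rw [show eps G 1 w = (show ↑(syzMod G 1) from ⟨z, he⟩) from hw]
      rfl
    · rintro ⟨w, hw⟩
      rw [← hw]
      show ch.ι 0 (ch.e0.symm (eps G 0 ((ker (fE (syzMod G 0))).subtype (eps G 1 w)))) = 0
      rcases h : (show ↥(ker (fE (syzMod G 0))) from eps G 1 w) with ⟨zv, hzv⟩
      rw [show (ker (fE (syzMod G 0))).subtype (eps G 1 w) = zv from congrArg Subtype.val h]
      rw [show eps G 0 zv = 0 from hzv]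
      show ch.ι 0 (ch.e0.symm (0 : ↑G)) = 0
      rw [map_zero, map_zero]
  | .negSucc (k+2) => by
    show Function.Exact ((ker (fE (syzMod G (k+1)))).subtype ∘ₗ (eps G (k+2)))
      ((ker (fE (syzMod G k))).subtype ∘ₗ (eps G (k+1)))
    intro z
    constructor
    · intro h0
      have he : eps G (k+1) z = 0 := by
        apply Subtype.val_injective
        exact h0
      obtain ⟨w, hw⟩ := fE_surj (syzMod G (k+2)) (show ↑(syzMod G (k+2)) from ⟨z, he⟩)
      refine ⟨w, ?_⟩
      show (ker (fE (syzMod G (k+1)))).subtype (eps G (k+2) w) = z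
      rw [show eps G (k+2) w = (show ↑(syzMod G (k+2)) from ⟨z, he⟩) from hw]
      rfl
    · rintro ⟨w, hw⟩
      rw [← hw]
      show (ker (fE (syzMod G k))).subtype
        (eps G (k+1) ((ker (fE (syzMod G (k+1)))).subtype (eps G (k+2) w))) = 0
      rcases h : (show ↥(ker (fE (syzMod G (k+1)))) from eps G (k+2) w) with ⟨zv, hzv⟩
      rw [show (ker (fE (syzMod G (k+1)))).subtype (eps G (k+2) w) = zv from congrArg Subtype.val h]
      rw [show eps G (k+1) zv = 0 from hzv]
      rfl


theorem exact_comp_surj {A B C' D : ModuleCat.{u} R} (p : A →ₗ[R] B) (i : B →ₗ[R] C')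
    (σ : C' →ₗ[R] D) (hp : Surjective p) (hex : Function.Exact i σ) :
    Function.Exact (i ∘ₗ p) σ := by
  intro z
  rw [hex z]
  constructor
  · rintro ⟨b, hb⟩
    obtain ⟨a, ha⟩ := hp b
    exact ⟨a, by show i (p a) = z; rw [ha, hb]⟩
  · rintro ⟨a, ha⟩
    exact ⟨p a, ha⟩

theorem gluHomExact (lg : LeftGood 𝒳 G) (ch : RChain 𝒳 G) :
    ∀ (Y : ModuleCat.{u} R), 𝒳 Y → ∀ n : ℤ,
    Function.Exact (fun f : gluP ch (n+1+1) →ₗ[R] Y => f ∘ₗ gluD ch (n+1))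
      (fun f : gluP ch (n+1) →ₗ[R] Y => f ∘ₗ gluD ch n) := by
  intro Y hY n f
  constructor
  · intro hf
    cases n with
    | ofNat k =>
      have hexσ := exact_comp_surj (ch.p (k+1)) (ch.ι (k+2)) (ch.p (k+2)) (ch.surj (k+1))
        (ch.exact (k+2))
      obtain ⟨g, hg⟩ := hom_factor hY (gluD ch (Int.ofNat k)) (gluD ch (Int.ofNat k + 1))
        (gluExact ch (Int.ofNat k)) (ch.p (k+2)) (ch.surj (k+2)) hexσ (ch.ev (k+3)) f hf
      exact ⟨g, hg⟩
    | negSucc k =>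
      cases k with
      | zero =>
        have hexσ := exact_comp_surj (ch.p 0) (ch.ι 1) (ch.p 1) (ch.surj 0) (ch.exact 1)
        obtain ⟨g, hg⟩ := hom_factor hY (gluD ch (Int.negSucc 0)) (gluD ch (Int.negSucc 0 + 1))
          (gluExact ch (Int.negSucc 0)) (ch.p 1) (ch.surj 1) hexσ (ch.ev 2) f hf
        exact ⟨g, hg⟩
      | succ k' =>
        cases k' with
        | zero =>
          have hsurj : Surjective ((ch.e0.symm.toLinearMap : ↑G →ₗ[R] ↑(ch.C 0)) ∘ₗ eps G 0) := by
            intro c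
            obtain ⟨x, hx⟩ := fE_surj (syzMod G 0) (show ↑(syzMod G 0) from ch.e0 c)
            refine ⟨x, ?_⟩
            show ch.e0.symm (eps G 0 x) = c
            rw [show eps G 0 x = (show ↑(syzMod G 0) from ch.e0 c) from hx]
            exact ch.e0.symm_apply_apply c
          have hexσ := exact_comp_surj (ch.e0.symm.toLinearMap ∘ₗ eps G 0) (ch.ι 0) (ch.p 0)
            hsurj (ch.exact 0)
          obtain ⟨g, hg⟩ := hom_factor hY (gluD ch (Int.negSucc 1)) (gluD ch (Int.negSucc 1 + 1))
            (gluExact ch (Int.negSucc 1)) (ch.p 0) (ch.surj 0) hexσ (ch.ev 1) f hf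
          exact ⟨g, hg⟩
        | succ k =>
          have hexσ : Function.Exact
              ((ker (fE (syzMod G k))).subtype ∘ₗ (eps G (k+1))) (eps G k) := by
            intro z
            constructor
            · intro h0
              obtain ⟨w, hw⟩ := fE_surj (syzMod G (k+1)) (show ↑(syzMod G (k+1)) from ⟨z, h0⟩)
              refine ⟨w, ?_⟩
              show (ker (fE (syzMod G k))).subtype (eps G (k+1) w) = z
              rw [show eps G (k+1) w = (show ↑(syzMod G (k+1)) from ⟨z, h0⟩) from hw]
              rfl
            · rintro ⟨w, hw⟩
              rw [← hw]
              show eps G k ((ker (fE (syzMod G k))).subtype (eps G (k+1) w)) = 0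
              rcases h : (show ↥(ker (fE (syzMod G k))) from eps G (k+1) w) with ⟨zv, hzv⟩
              rw [show (ker (fE (syzMod G k))).subtype (eps G (k+1) w) = zv
                from congrArg Subtype.val h]
              exact hzv
          have hevk : Ext1Vanish 𝒳 (syzMod G k) := lg k (syzMod G k) (res_syz G k)
          have hsurjk : Surjective (eps G k) := fE_surj (syzMod G k)
          obtain ⟨g, hg⟩ := hom_factor hY (gluD ch (Int.negSucc (k+2)))
            (gluD ch (Int.negSucc (k+2) + 1)) (gluExact ch (Int.negSucc (k+2)))
            (eps G k) hsurjk hexσ hevk f hf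
          exact ⟨g, hg⟩
  · rintro ⟨g, hg⟩
    show f ∘ₗ gluD ch n = 0
    have hg' : g ∘ₗ gluD ch (n+1) = f := hg
    rw [← hg']
    ext x
    show g (gluD ch (n+1) (gluD ch n x)) = 0
    rw [(gluExact ch n).apply_apply_eq_zero x, map_zero]

theorem isgp_xgp {G : ModuleCat.{u} R} (h : IsGP 𝒳 G) : XGorensteinProjective R 𝒳 G := by
  obtain ⟨lg, ⟨ch⟩⟩ := h
  refine ⟨⟨gluP ch, gluD ch, gluProj ch, gluExact ch, gluHomExact lg ch⟩, ⟨?_⟩⟩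
  have heq : range (ch.ι 0) = ker (gluD ch 0) := by
    ext z
    constructor
    · rintro ⟨c, rfl⟩
      show ch.ι 1 (ch.p 0 (ch.ι 0 c)) = 0
      rw [(ch.exact 0).apply_apply_eq_zero c, map_zero]
    · intro hz
      have h1 : ch.p 0 z = 0 := by
        apply ch.inj 1
        rw [show ch.ι 1 (ch.p 0 z) = 0 from hz, map_zero]
      exact (ch.exact 0 z).mp h1
  exact ch.e0.symm.trans ((LinearEquiv.ofInjective (ch.ι 0) (ch.inj 0)).trans
    (LinearEquiv.ofEq _ _ heq))


/-! ### from complete resolutions to IsGP -/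

section FromXGP
variable (C : XCompleteResolution R 𝒳)

noncomputable def Zn (n : ℤ) : ModuleCat.{u} R := ModuleCat.of R (ker (C.d n))

noncomputable def rho (a : ℤ) : C.P a →ₗ[R] Zn C (a+1) :=
  (C.d a).codRestrict (ker (C.d (a+1))) (fun x => (C.exact a).apply_apply_eq_zero x)

theorem rho_surj (a : ℤ) : Surjective (rho C a) := by
  rintro ⟨z, hz⟩
  obtain ⟨x, hx⟩ := ((C.exact a) z).mp hz
  exact ⟨x, Subtype.ext hx⟩

theorem exact_sub_rho (a : ℤ) :
    Function.Exact ((ker (C.d a)).subtype : ker (C.d a) →ₗ[R] C.P a) (rho C a) := by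
  intro w
  constructor
  · intro h0
    have hw : C.d a w = 0 := congrArg Subtype.val h0
    exact ⟨⟨w, hw⟩, rfl⟩
  · rintro ⟨⟨z, hz⟩, rfl⟩
    exact Subtype.ext hz

theorem res1Zn (a : ℤ) : ResWithKernel R (Proj R) 1 (Zn C a) (Zn C (a+1)) :=
  res_one ((ker (C.d a)).subtype) (rho C a) (C.projective a) Subtype.val_injective
    (rho_surj C a) (exact_sub_rho C a)

theorem resZn : ∀ (j : ℕ) (n : ℤ), ResWithKernel R (Proj R) j (Zn C (n - j)) (Zn C n) := by
  intro j
  induction j with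
  | zero =>
    intro n
    rw [show n - ((0:ℕ):ℤ) = n by push_cast; ring]
    exact ⟨LinearEquiv.refl R _⟩
  | succ j ih =>
    intro n
    have h1 := res1Zn C (n - ((j+1:ℕ):ℤ))
    rw [show n - ((j+1:ℕ):ℤ) + 1 = n - ((j:ℕ):ℤ) by push_cast; ring] at h1
    have := res_compose h1 (ih n)
    rw [Nat.add_comm] at this
    exact this

theorem evZn' (m : ℤ) : Ext1Vanish 𝒳 (Zn C (m+1+1+1)) := by
  refine ev_of_pres (K := Zn C (m+1+1)) (P := C.P (m+1+1))
    ((ker (C.d (m+1+1))).subtype) (rho C (m+1+1)) (C.projective (m+1+1))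
    Subtype.val_injective (rho_surj C (m+1+1)) (exact_sub_rho C (m+1+1)) ?_
  intro Y hY φ
  set f : C.P (m+1) →ₗ[R] Y := φ ∘ₗ rho C (m+1) with hfdef
  have hf : f ∘ₗ C.d m = 0 := by
    ext x
    show φ (rho C (m+1) (C.d m x)) = 0
    have hz : rho C (m+1) (C.d m x) = 0 :=
      Subtype.ext ((C.exact m).apply_apply_eq_zero x)
    rw [hz, map_zero]
  obtain ⟨g, hg⟩ := ((C.homExact Y hY m) f).mp hf
  refine ⟨g, ?_⟩
  ext z
  show g ((ker (C.d (m+1+1))).subtype z) = φ z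
  obtain ⟨x, hx⟩ := ((C.exact (m+1)) ((ker (C.d (m+1+1))).subtype z)).mp z.2
  have h1 : g ((ker (C.d (m+1+1))).subtype z) = g (C.d (m+1) x) := by
    rw [show C.d (m+1) x = (ker (C.d (m+1+1))).subtype z from hx]
  have h2 : g (C.d (m+1) x) = f x := LinearMap.congr_fun hg x
  have h4 : rho C (m+1) x = z := Subtype.ext hx
  rw [h1, h2, hfdef]
  show φ (rho C (m+1) x) = φ z
  rw [h4]

theorem evZn (n : ℤ) : Ext1Vanish 𝒳 (Zn C n) := by
  have := evZn' C (n-3)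
  rwa [show n-3+1+1+1 = n by ring] at this

end FromXGP

theorem xgp_isgp {G : ModuleCat.{u} R} (h : XGorensteinProjective R 𝒳 G) : IsGP 𝒳 G := by
  obtain ⟨C, ⟨e⟩⟩ := h
  have e' : (Zn C 0) ≃ₗ[R] G := e.symm
  constructor
  · have lgZ : LeftGood 𝒳 (Zn C 0) := fun j K hres =>
      (ev_transfer hres (resZn C j 0)).mpr (evZn C (0 - j))
    exact lg_congr e' lgZ
  · refine ⟨{
      C := fun k => Zn C k
      Q := fun k => C.P k
      ι := fun k => (ker (C.d (k:ℤ))).subtype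
      p := fun k => rho C (k:ℤ)
      proj := fun k => C.projective k
      inj := fun k => Subtype.val_injective
      surj := fun k => rho_surj C (k:ℤ)
      exact := fun k => exact_sub_rho C (k:ℤ)
      ev := fun k => evZn C k
      e0 := e' }⟩

end GP


/-- If `0 → K → G_{n-1} → ⋯ → G_0 → M → 0` and `0 → K' → G'_{n-1} → ⋯ → G'_0 → M → 0`
are exact with all `G_i`, `G'_i` `𝒳`-Gorenstein projective, then `K` is
`𝒳`-Gorenstein projective iff `K'` is. -/
theorem xGorensteinProjective_kernel_iff
    (R : Type u) [Ring R] (𝒳 : ModuleCat.{u} R → Prop)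
    (h𝒳 : ∀ P : ModuleCat.{u} R, Module.Projective R P → 𝒳 P)
    (n : ℕ) (M K K' : ModuleCat.{u} R)
    (h : ResWithKernel R (XGorensteinProjective R 𝒳) n K M)
    (h' : ResWithKernel R (XGorensteinProjective R 𝒳) n K' M) :
    XGorensteinProjective R 𝒳 K ↔ XGorensteinProjective R 𝒳 K' := by
  have hiff : ∀ N : ModuleCat.{u} R, XGorensteinProjective R 𝒳 N ↔ GP.IsGP 𝒳 N :=
    fun N => ⟨GP.xgp_isgp, GP.isgp_xgp⟩
  have h1 := GP.res_mono (fun N hN => (hiff N).mp hN) h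
  have h2 := GP.res_mono (fun N hN => (hiff N).mp hN) h'
  rw [hiff K, hiff K']
  exact GP.gp_S h𝒳 h1 h2
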